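/- arXiv:1012.2632 — 4 statements merged into one kernel-verified Lean document; each statement's English description precedes it below -/
import Mathlib

section
/- Let Γ be a distance-regular graph with diameter D ≥ 2t + 2 for some positive integer t. Then the second largest eigenvalue θ₁ of Γ is at least the largest eigenvalue μ_t of the tridiagonal matrix L_Γ(t). Formally: there is an eigenvalue θ of the adjacency matrix of Γ with θ < k and θ ≥ μ_t. -/
open SimpleGraph

/-- `IsDRG G D b c` : `G` is a distance-regular graph with diameter `D` and
intersection numbers `b i`, `c i`.  The valency is `k = b 0`. -/
structure IsDRG {V : Type*} [Fintype V] (G : SimpleGraph V) (D : ℕ) (b c : ℕ → ℕ) : Prop where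
  connected : G.Connected
  one_le_diam : 1 ≤ D
  dist_le : ∀ x y : V, G.dist x y ≤ D
  exists_dist_eq : ∃ x y : V, G.dist x y = D
  c_zero : c 0 = 0
  b_diam : b D = 0
  c_one : c 1 = 1
  count_c : ∀ i ≤ D, ∀ x y : V, G.dist x y = i →
      {z : V | G.Adj y z ∧ G.dist x z = i - 1}.ncard = c i
  count_b : ∀ i ≤ D, ∀ x y : V, G.dist x y = i →
      {z : V | G.Adj y z ∧ G.dist x z = i + 1}.ncard = b i

/-- `θ` is an eigenvalue of the adjacency matrix of `G`. -/
def IsAdjEigenvalue {V : Type*} [Fintype V] (G : SimpleGraph V) [DecidableRel G.Adj]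
    (θ : ℝ) : Prop :=
  ∃ v : V → ℝ, v ≠ 0 ∧ (G.adjMatrix ℝ).mulVec v = θ • v

/-- The `(t+1) × (t+1)` tridiagonal matrix `L_Γ(t)` with subdiagonal `c i`,
diagonal `a i = b 0 - b i - c i` (so `a 0 = 0`) and superdiagonal `b i`. -/
def Lmat (b c : ℕ → ℕ) (t : ℕ) : Matrix (Fin (t + 1)) (Fin (t + 1)) ℝ :=
  fun i j =>
    if (i : ℕ) = (j : ℕ) + 1 then (c (i : ℕ) : ℝ)
    else if (i : ℕ) = (j : ℕ) then (b 0 : ℝ) - (b (i : ℕ) : ℝ) - (c (i : ℕ) : ℝ)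
    else if (j : ℕ) = (i : ℕ) + 1 then (b (i : ℕ) : ℝ)
    else 0

/-- `θ` is an eigenvalue of the real matrix `M`. -/
def IsMatEigenvalue {n : Type*} [Fintype n] (M : Matrix n n ℝ) (θ : ℝ) : Prop :=
  ∃ v : n → ℝ, v ≠ 0 ∧ M.mulVec v = θ • v

/-- A Terwilliger graph: connected, non-complete, and for any two vertices at
distance two the set of their common neighbours is a clique. -/
def IsTerwilliger {V : Type*} (G : SimpleGraph V) : Prop :=
  G.Connected ∧ (∃ u v : V, u ≠ v ∧ ¬ G.Adj u v) ∧
    ∀ u v : V, G.dist u v = 2 → G.IsClique (G.commonNeighbors u v)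



set_option linter.unusedSectionVars false
set_option linter.unusedVariables false
open Finset Matrix SimpleGraph

section Aux

open SimpleGraph Finset Matrix

variable {V : Type} [Fintype V]

/-- step-down along geodesic -/
lemma exists_adj_dist_pred (G : SimpleGraph V) {x y : V} {d : ℕ} (h : G.dist x y = d + 1) :
    ∃ z, G.Adj x z ∧ G.dist z y = d := by
  have hr : G.Reachable x y := by
    apply SimpleGraph.Reachable.of_dist_ne_zero (G := G); omega
  obtain ⟨p, hp⟩ := hr.exists_walk_length_eq_dist
  cases p with
  | nil => rw [SimpleGraph.dist_self] at h; omega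
  | @cons _ z _ ha q =>
    refine ⟨z, ha, le_antisymm ?_ ?_⟩
    · have := SimpleGraph.dist_le q
      simp [SimpleGraph.Walk.length_cons] at hp
      omega
    · by_contra hlt
      push_neg at hlt
      obtain ⟨q0, hq0⟩ := (q.reachable).exists_walk_length_eq_dist
      have : G.dist x y ≤ (SimpleGraph.Walk.cons ha q0).length := SimpleGraph.dist_le _
      simp [SimpleGraph.Walk.length_cons] at this
      omega

lemma exists_dist_eq_of_le (G : SimpleGraph V) (hc : G.Connected) {x y : V} {i : ℕ}
    (hi : i ≤ G.dist x y) : ∃ z, G.dist x z = i := by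
  induction i with
  | zero => exact ⟨x, by simp⟩
  | succ n ih =>
    -- strengthen: get z with dist x z = n and dist z y = dist x y - n
    clear ih
    suffices h : ∀ n, n ≤ G.dist x y → ∃ z, G.dist x z = n ∧ G.dist z y = G.dist x y - n by
      obtain ⟨z, hz, _⟩ := h (n+1) hi; exact ⟨z, hz⟩
    intro m
    induction m with
    | zero => intro _; exact ⟨x, by simp, by omega⟩
    | succ m ih =>
      intro hm
      obtain ⟨z, hz1, hz2⟩ := ih (by omega)
      have : G.dist z y = (G.dist x y - m - 1) + 1 := by omega
      obtain ⟨z', ha, hz'⟩ := exists_adj_dist_pred G this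
      refine ⟨z', le_antisymm ?_ ?_, by omega⟩
      · have h1 := hc.dist_triangle (u := x) (v := z) (w := z')
        have h2 : G.dist z z' = 1 := (SimpleGraph.dist_eq_one_iff_adj).2 ha
        omega
      · have h1 := hc.dist_triangle (u := x) (v := z') (w := y)
        omega


open Finset Matrix

lemma spectral_key {V : Type} [Fintype V] [DecidableEq V]
    (A : Matrix V V ℝ) (hA : A.IsHermitian) (k μ : ℝ)
    (hle : ∀ (θ : ℝ) (v : V → ℝ), v ≠ 0 → A.mulVec v = θ • v → θ ≤ k)
    (hk : ∀ v : V → ℝ, A.mulVec v = k • v → ∃ m : ℝ, v = fun _ => m)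
    (w : V → ℝ) (hw0 : w ≠ 0) (hsum : ∑ z, w z = 0)
    (hq : w ⬝ᵥ A.mulVec w = μ * (w ⬝ᵥ w)) :
    ∃ θ : ℝ, (∃ v : V → ℝ, v ≠ 0 ∧ A.mulVec v = θ • v) ∧ θ < k ∧ μ ≤ θ := by
  classical
  set bE := hA.eigenvectorBasis with hbE
  set lam := hA.eigenvalues with hlam
  set W : EuclideanSpace ℝ V := (WithLp.equiv 2 (V → ℝ)).symm w with hW
  have hWz : ∀ z, W z = w z := fun z => rfl
  set cc : V → ℝ := fun i => bE.repr W i with hcc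
  have hrepr : ∀ i, cc i = inner ℝ (bE i) W := fun i => bE.repr_apply_apply W i
  have hWsum : ∑ i, cc i • bE i = W := bE.sum_repr W
  have hinner : ∀ x y : EuclideanSpace ℝ V, (inner ℝ x y : ℝ) = ∑ z, x z * y z := by
    intro x y
    rw [PiLp.inner_apply]
    simp [RCLike.inner_apply, mul_comm]
  set eb : V → V → ℝ := fun i => (WithLp.equiv 2 (V → ℝ)) (bE i) with heb
  have hev : ∀ i, A.mulVec (eb i) = lam i • (eb i) :=
    fun i => hA.mulVec_eigenvectorBasis i
  have hevne : ∀ i, eb i ≠ 0 := by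
    intro i hz
    exact bE.orthonormal.ne_zero i (by ext z; exact congrFun hz z)
  have hebz : ∀ i z, eb i z = (bE i) z := fun i z => rfl
  have hsymm : ∀ i j, A i j = A j i := by
    intro i j
    conv_lhs => rw [← hA]
    simp [Matrix.conjTranspose_apply]
  have hswap : ∀ v u : V → ℝ, v ⬝ᵥ A.mulVec u = (A.mulVec v) ⬝ᵥ u := by
    intro v u
    simp only [dotProduct, mulVec, dotProduct, Finset.mul_sum, Finset.sum_mul]
    rw [Finset.sum_comm]
    refine Finset.sum_congr rfl fun y _ => Finset.sum_congr rfl fun z _ => ?_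
    rw [hsymm y z]; ring
  have hccd : ∀ i, cc i = (eb i) ⬝ᵥ w := by
    intro i; rw [hrepr, hinner]; rfl
  have hwfun : w = ∑ i, cc i • (eb i) := by
    funext z
    have h0 : (∑ i, cc i • bE i) z = W z := by rw [hWsum]
    rw [WithLp.ofLp_sum, Finset.sum_apply] at h0
    rw [← hWz z, ← h0, Finset.sum_apply]
    rfl
  have sum_dot : ∀ (f : V → V → ℝ) (v : V → ℝ), (∑ i, f i) ⬝ᵥ v = ∑ i, f i ⬝ᵥ v := by
    intro f v
    simp only [dotProduct, Finset.sum_apply, Finset.sum_mul]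
    rw [Finset.sum_comm]
  -- Parseval
  have hWW : (w ⬝ᵥ w) = ∑ i, cc i * cc i := by
    have h1 : (inner ℝ W W : ℝ) = inner ℝ (bE.repr W) (bE.repr W) :=
      (bE.repr.inner_map_map W W).symm
    have h2 : (inner ℝ (bE.repr W) (bE.repr W) : ℝ) = ∑ i, cc i * cc i := hinner _ _
    have h3 : (inner ℝ W W : ℝ) = w ⬝ᵥ w := by rw [hinner]; rfl
    rw [← h3, h1, h2]
  -- quadratic form in coordinates
  have hAW : w ⬝ᵥ A.mulVec w = ∑ i, lam i * (cc i * cc i) := by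
    nth_rewrite 1 [hwfun]
    rw [sum_dot]
    refine Finset.sum_congr rfl fun i _ => ?_
    rw [smul_dotProduct, hswap, hev i, smul_dotProduct, ← hccd i]
    simp [smul_eq_mul]; ring
  have hkey : ∑ i, lam i * (cc i * cc i) = μ * ∑ i, cc i * cc i := by
    rw [← hWW, ← hAW]; exact hq
  have hex : ∃ i, cc i ≠ 0 := by
    by_contra hno
    push_neg at hno
    apply hw0
    funext z
    rw [congrFun hwfun z]
    simp [hno]
  have hlt : ∀ i, cc i ≠ 0 → lam i < k := by
    intro i hi
    have hle' : lam i ≤ k := hle (lam i) (bE i) (hevne i) (hev i)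
    rcases lt_or_eq_of_le hle' with hcase | hcase
    · exact hcase
    · exfalso
      obtain ⟨m, hm⟩ := hk (eb i) (by rw [hev i, hcase])
      apply hi
      rw [hccd i]
      have hbz : ∀ z, eb i z = m := fun z => congrFun hm z
      have : (eb i) ⬝ᵥ w = ∑ z, m * w z :=
        Finset.sum_congr rfl fun z _ => by rw [hbz z]
      rw [this, ← Finset.mul_sum, hsum, mul_zero]
  have hfind : ∃ i, cc i ≠ 0 ∧ μ ≤ lam i := by
    by_contra hno
    push_neg at hno
    obtain ⟨i0, hi0⟩ := hex
    have hstrict : ∑ i, lam i * (cc i * cc i) < ∑ i, μ * (cc i * cc i) := by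
      apply Finset.sum_lt_sum
      · intro i _
        by_cases hci : cc i = 0
        · simp [hci]
        · have h1 := le_of_lt (hno i hci)
          have h2 : 0 < cc i * cc i := mul_self_pos.mpr hci
          nlinarith
      · exact ⟨i0, Finset.mem_univ _,
          mul_lt_mul_of_pos_right (hno i0 hi0) (mul_self_pos.mpr hi0)⟩
    rw [hkey, ← Finset.mul_sum] at hstrict
    exact lt_irrefl _ hstrict
  obtain ⟨i, hi, hmu⟩ := hfind
  exact ⟨lam i, ⟨eb i, hevne i, hev i⟩, hlt i hi, hmu⟩

open Finset Matrix SimpleGraph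

variable {V : Type} [Fintype V]

lemma adj_eigenvalue_le_degree (G : SimpleGraph V) [DecidableRel G.Adj] (k : ℕ)
    (hreg : ∀ z, G.degree z = k) (θ : ℝ) (v : V → ℝ) (hv : v ≠ 0)
    (heq : (G.adjMatrix ℝ).mulVec v = θ • v) : θ ≤ k := by
  classical
  have hne : (Finset.univ : Finset V).Nonempty := by
    rcases Function.ne_iff.mp hv with ⟨y, _⟩
    exact ⟨y, Finset.mem_univ y⟩
  obtain ⟨z, _, hz⟩ := Finset.exists_max_image Finset.univ (fun z => |v z|) hne
  have hzpos : 0 < |v z| := by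
    rcases Function.ne_iff.mp hv with ⟨y, hy⟩
    have := hz y (Finset.mem_univ y)
    have : 0 < |v y| := abs_pos.mpr hy
    linarith [hz y (Finset.mem_univ y)]
  have h1 : |θ| * |v z| ≤ (k : ℝ) * |v z| := by
    have hmv : (G.adjMatrix ℝ).mulVec v z = θ * v z := by
      rw [heq]; rfl
    rw [SimpleGraph.adjMatrix_mulVec_apply] at hmv
    calc |θ| * |v z| = |∑ w ∈ G.neighborFinset z, v w| := by
          rw [← abs_mul, ← hmv]
      _ ≤ ∑ w ∈ G.neighborFinset z, |v w| := Finset.abs_sum_le_sum_abs _ _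
      _ ≤ ∑ _w ∈ G.neighborFinset z, |v z| :=
          Finset.sum_le_sum fun w _ => hz w (Finset.mem_univ w)
      _ = (k : ℝ) * |v z| := by
          rw [Finset.sum_const, SimpleGraph.card_neighborFinset_eq_degree, hreg z]
          simp [nsmul_eq_mul]
  have h2 : |θ| ≤ k := le_of_mul_le_mul_right (by linarith) hzpos
  calc θ ≤ |θ| := le_abs_self θ
    _ ≤ k := h2

lemma adj_eigenvector_constant (G : SimpleGraph V) [DecidableRel G.Adj] (k : ℕ)
    (hc : G.Connected) (hk : 0 < k) (hreg : ∀ z, G.degree z = k) (v : V → ℝ)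
    (heq : (G.adjMatrix ℝ).mulVec v = (k : ℝ) • v) : ∃ m : ℝ, v = fun _ => m := by
  classical
  have : Nonempty V := hc.nonempty
  have hne : (Finset.univ : Finset V).Nonempty := Finset.univ_nonempty
  obtain ⟨z₀, _, hz₀⟩ := Finset.exists_max_image Finset.univ v hne
  set m := v z₀ with hm
  have step : ∀ z, v z = m → ∀ w, G.Adj z w → v w = m := by
    intro z hzm w haw
    by_contra hwm
    have hwlt : v w < m := lt_of_le_of_ne (hz₀ w (Finset.mem_univ w)) hwm
    have hmv : (G.adjMatrix ℝ).mulVec v z = (k : ℝ) * v z := by rw [heq]; rfl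
    rw [SimpleGraph.adjMatrix_mulVec_apply] at hmv
    have hstrict : ∑ w' ∈ G.neighborFinset z, v w' < ∑ _w' ∈ G.neighborFinset z, m := by
      apply Finset.sum_lt_sum
      · intro w' _; exact hz₀ w' (Finset.mem_univ w')
      · exact ⟨w, by rwa [SimpleGraph.mem_neighborFinset], hwlt⟩
    rw [Finset.sum_const, SimpleGraph.card_neighborFinset_eq_degree, hreg z,
      nsmul_eq_mul] at hstrict
    rw [hmv, hzm] at hstrict
    exact lt_irrefl _ hstrict
  have hall : ∀ (a bb : V), G.Walk a bb → v a = m → v bb = m := by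
    intro a bb p
    induction p with
    | nil => exact id
    | cons ha q ih => intro h; exact ih (step _ h _ ha)
  refine ⟨m, funext fun z => ?_⟩
  exact hall z₀ z (hc.preconnected z₀ z).some rfl

open Finset Matrix


lemma Lmat_row (b c : ℕ → ℕ) (t : ℕ) (u : Fin (t+1) → ℝ) (U : ℕ → ℝ)
    (hU : ∀ i : ℕ, ∀ h : i ≤ t, U i = u ⟨i, by omega⟩) (hU0 : ∀ i, t < i → U i = 0)
    (hc0 : c 0 = 0) (μ : ℝ) (heq : (Lmat b c t).mulVec u = μ • u) :
    ∀ i : ℕ, i ≤ t →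
      (c i : ℝ) * U (i-1) + ((b 0:ℝ) - b i - c i) * U i + (b i : ℝ) * U (i+1) = μ * U i := by
  intro i hi
  set I : Fin (t+1) := ⟨i, by omega⟩ with hI
  have hrow : (Lmat b c t).mulVec u I = μ * u I := by rw [heq]; rfl
  have hexp : (Lmat b c t).mulVec u I = ∑ j, Lmat b c t I j * u j := rfl
  have hsplit : ∀ j : Fin (t+1), Lmat b c t I j * u j =
      (if (j:ℕ) + 1 = i then (c i : ℝ) * u j else 0) +
      ((if (j:ℕ) = i then ((b 0:ℝ) - b i - c i) * u j else 0) +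
       (if (j:ℕ) = i + 1 then (b i : ℝ) * u j else 0)) := by
    intro j
    have hIv : (I : ℕ) = i := rfl
    unfold Lmat
    rw [hIv]
    split_ifs <;> first | omega | ring
  rw [hexp, Finset.sum_congr rfl (fun j _ => hsplit j), Finset.sum_add_distrib,
    Finset.sum_add_distrib] at hrow
  have hB : ∑ j : Fin (t+1), (if (j:ℕ) = i then ((b 0:ℝ) - b i - c i) * u j else 0)
      = ((b 0:ℝ) - b i - c i) * U i := by
    rw [Finset.sum_eq_single I]
    · rw [if_pos rfl, hU i hi]
    · intro j _ hj
      rw [if_neg]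
      intro hji
      exact hj (Fin.ext hji)
    · intro hmem; exact absurd (Finset.mem_univ I) hmem
  have hA : ∑ j : Fin (t+1), (if (j:ℕ) + 1 = i then (c i : ℝ) * u j else 0)
      = (c i : ℝ) * U (i-1) := by
    rcases Nat.eq_zero_or_pos i with h0 | hpos
    · subst h0
      rw [Finset.sum_eq_zero]
      · simp [hc0]
      · intro j _; rw [if_neg]; omega
    · set J : Fin (t+1) := ⟨i - 1, by omega⟩ with hJ
      rw [Finset.sum_eq_single J]
      · rw [if_pos (by simp [hJ]; omega), hU (i-1) (by omega)]
      · intro j _ hj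
        rw [if_neg]
        intro hji
        exact hj (Fin.ext (by simp [hJ]; omega))
      · intro hmem; exact absurd (Finset.mem_univ J) hmem
  have hC : ∑ j : Fin (t+1), (if (j:ℕ) = i + 1 then (b i : ℝ) * u j else 0)
      = (b i : ℝ) * U (i+1) := by
    rcases Nat.lt_or_ge i t with hlt | hge
    · set J : Fin (t+1) := ⟨i + 1, by omega⟩ with hJ
      rw [Finset.sum_eq_single J]
      · rw [if_pos (by simp [hJ]), hU (i+1) (by omega)]
      · intro j _ hj
        rw [if_neg]
        intro hji
        exact hj (Fin.ext (by simp [hJ]; omega))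
      · intro hmem; exact absurd (Finset.mem_univ J) hmem
    · have hit : i = t := by omega
      rw [Finset.sum_eq_zero, hU0 (i+1) (by omega), mul_zero]
      intro j _
      rw [if_neg]
      have := j.isLt
      omega
  rw [hA, hB, hC, hU i hi] at hrow
  rw [hU i hi]
  linarith [hrow]

open Finset Matrix SimpleGraph

variable {V : Type} [Fintype V]

lemma adj_local (G : SimpleGraph V) [DecidableRel G.Adj] (hc : G.Connected)
    (D : ℕ) (b c : ℕ → ℕ)
    (hcount_c : ∀ i ≤ D, ∀ x y : V, G.dist x y = i →
      {z : V | G.Adj y z ∧ G.dist x z = i - 1}.ncard = c i)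
    (hcount_b : ∀ i ≤ D, ∀ x y : V, G.dist x y = i →
      {z : V | G.Adj y z ∧ G.dist x z = i + 1}.ncard = b i)
    (hreg : ∀ z : V, G.degree z = b 0) (hc0 : c 0 = 0)
    (x : V) (U : ℕ → ℝ) {i : ℕ} (hiD : i ≤ D) (z : V) (hz : G.dist x z = i) :
    (G.adjMatrix ℝ).mulVec (fun w => U (G.dist x w)) z =
      (c i : ℝ) * U (i-1) + ((b 0:ℝ) - b i - c i) * U i + (b i : ℝ) * U (i+1) := by
  classical
  rw [SimpleGraph.adjMatrix_mulVec_apply]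
  set N := G.neighborFinset z with hN
  -- distance bounds for neighbors
  have hbound : ∀ w ∈ N, i ≤ G.dist x w + 1 ∧ G.dist x w ≤ i + 1 := by
    intro w hw
    rw [hN, SimpleGraph.mem_neighborFinset] at hw
    have h1 : G.dist z w = 1 := SimpleGraph.dist_eq_one_iff_adj.2 hw
    have h2 := hc.dist_triangle (u := x) (v := z) (w := w)
    have h3 := hc.dist_triangle (u := x) (v := w) (w := z)
    have h4 : G.dist w z = 1 := by rw [SimpleGraph.dist_comm]; exact h1
    constructor <;> omega
  set A1 := N.filter (fun w => G.dist x w + 1 = i) with hA1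
  set A2 := N.filter (fun w => G.dist x w = i) with hA2
  set A3 := N.filter (fun w => G.dist x w = i + 1) with hA3
  -- partition of the sum
  have h2' : (N.filter (fun w => ¬ (G.dist x w + 1 = i))).filter (fun w => G.dist x w = i)
      = A2 := by
    rw [Finset.filter_filter, hA2]
    apply Finset.filter_congr
    intro w _
    constructor
    · rintro ⟨_, h⟩; exact h
    · intro hh; exact ⟨by omega, hh⟩
  have h3' : (N.filter (fun w => ¬ (G.dist x w + 1 = i))).filter (fun w => ¬ (G.dist x w = i))
      = A3 := by
    rw [Finset.filter_filter, hA3]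
    apply Finset.filter_congr
    intro w hw
    have := hbound w hw
    constructor
    · rintro ⟨h1, h2⟩; omega
    · intro hh; omega
  have hsum : ∑ w ∈ N, U (G.dist x w) =
      ∑ w ∈ A1, U (G.dist x w) + ∑ w ∈ A2, U (G.dist x w) + ∑ w ∈ A3, U (G.dist x w) := by
    have e1 := Finset.sum_filter_add_sum_filter_not N (fun w => G.dist x w + 1 = i)
      (fun w => U (G.dist x w))
    have e2 := Finset.sum_filter_add_sum_filter_not
      (N.filter (fun w => ¬ (G.dist x w + 1 = i))) (fun w => G.dist x w = i)
      (fun w => U (G.dist x w))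
    rw [h2', h3'] at e2
    rw [← e1, ← e2, ← hA1]
    ring
  -- cardinalities
  have hcard3 : A3.card = b i := by
    have hset : {w : V | G.Adj z w ∧ G.dist x w = i + 1} = ↑A3 := by
      ext w
      simp [hA3, hN, SimpleGraph.mem_neighborFinset]
    rw [← Set.ncard_coe_finset, ← hset, hcount_b i hiD x z hz]
  have hcard1 : A1.card = c i := by
    rcases Nat.eq_zero_or_pos i with h0 | hpos
    · subst h0
      rw [hc0]
      rw [Finset.card_eq_zero, hA1, Finset.filter_eq_empty_iff]
      intro w _; omega
    · have hset : {w : V | G.Adj z w ∧ G.dist x w = i - 1} = ↑A1 := by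
        ext w
        simp only [hA1, hN, Finset.coe_filter, SimpleGraph.mem_neighborFinset,
          Set.mem_setOf_eq, Set.mem_sep_iff, Finset.mem_coe]
        constructor
        · rintro ⟨h1, h2⟩; exact ⟨h1, by omega⟩
        · rintro ⟨h1, h2⟩; exact ⟨h1, by omega⟩
      rw [← Set.ncard_coe_finset, ← hset, hcount_c i hiD x z hz]
  have hcardN : N.card = b 0 := by
    rw [hN, SimpleGraph.card_neighborFinset_eq_degree, hreg z]
  have hcard2 : A1.card + A2.card + A3.card = b 0 := by
    rw [← hcardN]
    have e1 := Finset.card_filter_add_card_filter_not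
      (s := N) (p := fun w => G.dist x w + 1 = i)
    have e2 := Finset.card_filter_add_card_filter_not
      (s := N.filter (fun w => ¬ (G.dist x w + 1 = i))) (p := fun w => G.dist x w = i)
    rw [h2', h3'] at e2
    rw [← hA1] at e1
    omega
  -- sums over each part are constant
  have hsum1 : ∑ w ∈ A1, U (G.dist x w) = (c i : ℝ) * U (i - 1) := by
    rw [Finset.sum_congr rfl (fun w hw => by
      rw [show G.dist x w = i - 1 by
        have := Finset.mem_filter.1 hw
        omega])]
    rw [Finset.sum_const, hcard1, nsmul_eq_mul]
  have hsum2 : ∑ w ∈ A2, U (G.dist x w) = (A2.card : ℝ) * U i := by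
    rw [Finset.sum_congr rfl (fun w hw => by
      rw [show G.dist x w = i from (Finset.mem_filter.1 hw).2])]
    rw [Finset.sum_const, nsmul_eq_mul]
  have hsum3 : ∑ w ∈ A3, U (G.dist x w) = (b i : ℝ) * U (i + 1) := by
    rw [Finset.sum_congr rfl (fun w hw => by
      rw [show G.dist x w = i + 1 from (Finset.mem_filter.1 hw).2])]
    rw [Finset.sum_const, hcard3, nsmul_eq_mul]
  rw [hsum, hsum1, hsum2, hsum3]
  have : (A2.card : ℝ) = (b 0 : ℝ) - b i - c i := by
    rw [← hcard2, ← hcard1, ← hcard3]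
    push_cast
    ring
  rw [this]


end Aux

/-- **Lemma 3.2 (first part).**  If `Γ` is distance-regular with diameter `D ≥ 2t + 2`,
then the second largest eigenvalue `θ₁` of `Γ` is at least the largest eigenvalue `μ_t`
of `L_Γ(t)`: there is an adjacency eigenvalue `θ < k` with `θ ≥ μ_t`. -/
theorem second_largest_eigenvalue_ge_mu_t {V : Type} [Fintype V] (G : SimpleGraph V)
    [DecidableRel G.Adj] (D : ℕ) (b c : ℕ → ℕ) (h : IsDRG G D b c)
    (t : ℕ) (ht : 1 ≤ t) (hD : 2 * t + 2 ≤ D)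
    (μt : ℝ) (hμ : IsGreatest {μ : ℝ | IsMatEigenvalue (Lmat b c t) μ} μt) :
    ∃ θ : ℝ, IsAdjEigenvalue G θ ∧ θ < (b 0 : ℝ) ∧ μt ≤ θ := by
  classical
  have hc := h.connected
  obtain ⟨x, y, hxy⟩ := h.exists_dist_eq
  have hyx : G.dist y x = D := by rw [SimpleGraph.dist_comm]; exact hxy
  have htD : t ≤ D := by omega
  -- regularity
  have hreg : ∀ z : V, G.degree z = b 0 := by
    intro z
    have h0 := h.count_b 0 (Nat.zero_le D) z z (by simp)
    have hset : {w : V | G.Adj z w ∧ G.dist z w = 0 + 1} = ↑(G.neighborFinset z) := by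
      ext w
      simp only [Set.mem_setOf_eq, Finset.mem_coe, SimpleGraph.mem_neighborFinset]
      constructor
      · rintro ⟨h1, _⟩; exact h1
      · intro h1; exact ⟨h1, SimpleGraph.dist_eq_one_iff_adj.2 h1⟩
    rw [hset, Set.ncard_coe_finset, SimpleGraph.card_neighborFinset_eq_degree] at h0
    exact h0
  -- positive valency
  have hbpos : 0 < b 0 := by
    have hD1 : G.dist x y = (D - 1) + 1 := by omega
    obtain ⟨z, hadj, _⟩ := exists_adj_dist_pred G hD1
    have : z ∈ G.neighborFinset x := (SimpleGraph.mem_neighborFinset G x z).2 hadj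
    have := Finset.card_pos.2 ⟨z, this⟩
    rw [SimpleGraph.card_neighborFinset_eq_degree, hreg x] at this
    exact this
  -- eigenvector of L
  obtain ⟨u, hu0, huEq⟩ := hμ.1
  set U : ℕ → ℝ := fun j => if hj : j ≤ t then u ⟨j, by omega⟩ else 0 with hUdef
  have hUle : ∀ i : ℕ, ∀ hit : i ≤ t, U i = u ⟨i, by omega⟩ := by
    intro i hit; simp only [hUdef]; rw [dif_pos hit]
  have hUgt : ∀ i : ℕ, t < i → U i = 0 := by
    intro i hit; simp only [hUdef]; rw [dif_neg (by omega)]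
  have hLrow := Lmat_row b c t u U hUle hUgt h.c_zero μt huEq
  set f : V → ℝ := fun z => U (G.dist x z) with hf
  set g : V → ℝ := fun z => U (G.dist y z) with hg
  set A : Matrix V V ℝ := G.adjMatrix ℝ with hAdef
  -- pointwise quadratic identities
  have hptf : ∀ (x₀ : V), G.dist x₀ y = D ∨ G.dist x₀ x = D →
      ∀ z, (fun z => U (G.dist x₀ z)) z * (A.mulVec (fun z => U (G.dist x₀ z)) z)
        = μt * ((fun z => U (G.dist x₀ z)) z * (fun z => U (G.dist x₀ z)) z) := by
    intro x₀ _ z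
    by_cases hzt : G.dist x₀ z ≤ t
    · have hloc := adj_local G hc D b c h.count_c h.count_b hreg h.c_zero x₀ U
        (i := G.dist x₀ z) (by omega) z rfl
      rw [hloc, hLrow (G.dist x₀ z) hzt]
      ring
    · have hz0 : U (G.dist x₀ z) = 0 := hUgt _ (by omega)
      simp only [hz0]
      ring
  have hquad : ∀ (x₀ : V), (G.dist x₀ y = D ∨ G.dist x₀ x = D) →
      (fun z => U (G.dist x₀ z)) ⬝ᵥ A.mulVec (fun z => U (G.dist x₀ z))
        = μt * ((fun z => U (G.dist x₀ z)) ⬝ᵥ (fun z => U (G.dist x₀ z))) := by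
    intro x₀ hx₀
    have : ∀ z ∈ Finset.univ, (fun z => U (G.dist x₀ z)) z * (A.mulVec (fun z => U (G.dist x₀ z)) z)
        = μt * ((fun z => U (G.dist x₀ z)) z * (fun z => U (G.dist x₀ z)) z) :=
      fun z _ => hptf x₀ hx₀ z
    calc (fun z => U (G.dist x₀ z)) ⬝ᵥ A.mulVec (fun z => U (G.dist x₀ z))
        = ∑ z, (fun z => U (G.dist x₀ z)) z * (A.mulVec (fun z => U (G.dist x₀ z)) z) := rfl
      _ = ∑ z, μt * ((fun z => U (G.dist x₀ z)) z * (fun z => U (G.dist x₀ z)) z) :=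
          Finset.sum_congr rfl this
      _ = μt * ((fun z => U (G.dist x₀ z)) ⬝ᵥ (fun z => U (G.dist x₀ z))) := by
          rw [← Finset.mul_sum]; rfl
  have hquadf : f ⬝ᵥ A.mulVec f = μt * (f ⬝ᵥ f) := hquad x (Or.inl hxy)
  have hquadg : g ⬝ᵥ A.mulVec g = μt * (g ⬝ᵥ g) := hquad y (Or.inr hyx)
  -- support facts
  have hsupf : ∀ z, f z ≠ 0 → G.dist x z ≤ t := by
    intro z hz
    by_contra hgt
    exact hz (hUgt _ (by omega))
  have hsupg : ∀ z, g z ≠ 0 → G.dist y z ≤ t := by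
    intro z hz
    by_contra hgt
    exact hz (hUgt _ (by omega))
  have hdisj : ∀ z, f z = 0 ∨ g z = 0 := by
    intro z
    by_contra hcon
    push_neg at hcon
    have h1 := hsupf z hcon.1
    have h2 := hsupg z hcon.2
    have h3 := hc.dist_triangle (u := x) (v := z) (w := y)
    rw [SimpleGraph.dist_comm (u := z)] at h3
    omega
  have hfg : f ⬝ᵥ g = 0 := by
    apply Finset.sum_eq_zero
    intro z _
    rcases hdisj z with h0 | h0 <;> rw [h0] <;> ring
  have hgf : g ⬝ᵥ f = 0 := by rw [dotProduct_comm]; exact hfg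
  -- no edges between supports
  have hcross : ∀ (p q : V → ℝ), (∀ z, p z ≠ 0 → G.dist x z ≤ t) →
      (∀ z, q z ≠ 0 → G.dist y z ≤ t) → p ⬝ᵥ A.mulVec q = 0 := by
    intro p q hp hq
    apply Finset.sum_eq_zero
    intro z _
    by_cases hz : p z = 0
    · rw [hz]; ring
    · have h1 := hp z hz
      have h2 : A.mulVec q z = 0 := by
        rw [hAdef, SimpleGraph.adjMatrix_mulVec_apply]
        apply Finset.sum_eq_zero
        intro w hw
        rw [SimpleGraph.mem_neighborFinset] at hw
        by_contra hqw
        have h3 := hq w hqw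
        have h4 := hc.dist_triangle (u := x) (v := z) (w := w)
        have h5 := hc.dist_triangle (u := x) (v := w) (w := y)
        have h6 : G.dist z w = 1 := SimpleGraph.dist_eq_one_iff_adj.2 hw
        rw [SimpleGraph.dist_comm (u := w) (v := y)] at h5
        omega
      rw [h2]; ring
  have hfAg : f ⬝ᵥ A.mulVec g = 0 := hcross f g hsupf hsupg
  have hgAf : g ⬝ᵥ A.mulVec f = 0 := by
    have hswap : g ⬝ᵥ A.mulVec f = f ⬝ᵥ A.mulVec g := by
      rw [hAdef, SimpleGraph.dotProduct_mulVec_adjMatrix, SimpleGraph.dotProduct_mulVec_adjMatrix]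
      rw [Finset.sum_comm]
      refine Finset.sum_congr rfl fun i _ => Finset.sum_congr rfl fun j _ => ?_
      by_cases hadj : G.Adj i j
      · rw [if_pos hadj, if_pos ((G.adj_comm i j).1 hadj)]; ring
      · rw [if_neg hadj, if_neg (fun hji => hadj ((G.adj_comm j i).1 hji))]
    rw [hswap]; exact hfAg
  -- nonvanishing of f and g
  have hnz : ∀ (x₀ : V), G.dist x₀ y = D ∨ G.dist x₀ x = D →
      (fun z => U (G.dist x₀ z)) ≠ 0 := by
    intro x₀ hx₀ hzero
    apply hu0
    funext i
    have hit : (i : ℕ) ≤ t := by omega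
    have hdD : (i : ℕ) ≤ G.dist x₀ (if G.dist x₀ y = D then y else x) := by
      split <;> omega
    obtain ⟨z, hzd⟩ := exists_dist_eq_of_le G hc hdD
    have := congrFun hzero z
    simp only [Pi.zero_apply] at this
    rw [hzd, hUle (i : ℕ) hit] at this
    rw [show (⟨(i : ℕ), by omega⟩ : Fin (t + 1)) = i from Fin.ext rfl] at this
    exact this
  have hf0 : f ≠ 0 := hnz x (Or.inl hxy)
  have hg0 : g ≠ 0 := hnz y (Or.inr hyx)
  -- construct the test vector w orthogonal to the all-ones vector
  set sf : ℝ := ∑ z, f z with hsf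
  set sg : ℝ := ∑ z, g z with hsg
  have hA : A.IsHermitian := by
    rw [hAdef]
    ext i j
    simp only [Matrix.conjTranspose_apply, SimpleGraph.adjMatrix_apply, star_trivial]
    by_cases hadj : G.Adj i j
    · rw [if_pos hadj, if_pos ((G.adj_comm i j).1 hadj)]
    · rw [if_neg hadj, if_neg (fun hji => hadj ((G.adj_comm j i).1 hji))]
  have hle := adj_eigenvalue_le_degree G (b 0) hreg
  have hkconst := adj_eigenvector_constant G (b 0) hc hbpos hreg
  have main : ∃ w : V → ℝ, w ≠ 0 ∧ (∑ z, w z) = 0 ∧ w ⬝ᵥ A.mulVec w = μt * (w ⬝ᵥ w) := by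
    by_cases hsf0 : sf = 0
    · exact ⟨f, hf0, hsf0, hquadf⟩
    by_cases hsg0 : sg = 0
    · exact ⟨g, hg0, hsg0, hquadg⟩
    refine ⟨sg • f - sf • g, ?_, ?_, ?_⟩
    · obtain ⟨z, hz⟩ := Function.ne_iff.mp hf0
      have hgz : g z = 0 := by
        rcases hdisj z with h0 | h0
        · exact absurd h0 hz
        · exact h0
      intro hzero
      have := congrFun hzero z
      simp only [Pi.sub_apply, Pi.smul_apply, smul_eq_mul, Pi.zero_apply, hgz] at this
      have : sg * f z = 0 := by linarith
      rcases mul_eq_zero.1 this with h0 | h0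
      · exact hsg0 h0
      · exact hz h0
    · simp only [Pi.sub_apply, Pi.smul_apply, smul_eq_mul]
      rw [Finset.sum_sub_distrib, ← Finset.mul_sum, ← Finset.mul_sum, ← hsf, ← hsg]
      ring
    · rw [Matrix.mulVec_sub, Matrix.mulVec_smul, Matrix.mulVec_smul,
        sub_dotProduct, smul_dotProduct, smul_dotProduct,
        dotProduct_sub, dotProduct_sub,
        dotProduct_smul, dotProduct_smul, dotProduct_smul,
        dotProduct_smul]
      rw [sub_dotProduct, smul_dotProduct, smul_dotProduct,
        dotProduct_sub, dotProduct_sub,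
        dotProduct_smul, dotProduct_smul, dotProduct_smul,
        dotProduct_smul]
      simp only [smul_eq_mul]
      rw [hquadf, hquadg, hfAg, hgAf, hfg, hgf]
      ring
  obtain ⟨w, hw0, hwsum, hwq⟩ := main
  obtain ⟨θ, hev, hlt, hge⟩ := spectral_key A hA (b 0) μt hle hkconst w hw0 hwsum hwq
  exact ⟨θ, hev, hlt, hge⟩
end

section
/- Let Γ be a distance-regular graph with diameter D and let 1 ≤ t ≤ D − 1. Then the largest eigenvalue μ_t of the tridiagonal matrix L_Γ(t) satisfies μ_t > a_t + c_t. -/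
open SimpleGraph

noncomputable def Smat (b c : ℕ → ℕ) (t : ℕ) : Matrix (Fin (t + 1)) (Fin (t + 1)) ℝ :=
  fun i j =>
    if (i : ℕ) = (j : ℕ) + 1 then Real.sqrt ((b ((i : ℕ) - 1) : ℝ) * (c (i : ℕ) : ℝ))
    else if (i : ℕ) = (j : ℕ) then (b 0 : ℝ) - (b (i : ℕ) : ℝ) - (c (i : ℕ) : ℝ)
    else if (j : ℕ) = (i : ℕ) + 1 then Real.sqrt ((b (i : ℕ) : ℝ) * (c ((i : ℕ) + 1) : ℝ))
    else 0

noncomputable def dSeq (b c : ℕ → ℕ) : ℕ → ℝ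
  | 0 => 1
  | (i+1) => dSeq b c i * Real.sqrt ((b i : ℝ) / (c (i+1) : ℝ))

noncomputable def hSeq (b c : ℕ → ℕ) (al : ℝ) : ℕ → ℝ
  | 0 => al - ((b 0 : ℝ) - (b 0 : ℝ) - (c 0 : ℝ))
  | (i+1) => al - ((b 0 : ℝ) - (b (i+1) : ℝ) - (c (i+1) : ℝ))
      - ((b i : ℝ) * (c (i+1) : ℝ)) / hSeq b c al i

lemma sqrt_div_mul {x y : ℝ} (hx : 0 ≤ x) (hy : 0 < y) :
    Real.sqrt (x / y) * y = Real.sqrt (x * y) := by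
  have h1 : x * y = (x / y) * y ^ 2 := by field_simp
  rw [h1, Real.sqrt_mul (div_nonneg hx hy.le), Real.sqrt_sq hy.le]

lemma sqrt_mul_sqrt_div {x y : ℝ} (hx : 0 ≤ x) (hy : 0 < y) :
    Real.sqrt (x * y) * Real.sqrt (x / y) = x := by
  rw [← Real.sqrt_mul (mul_nonneg hx hy.le)]
  have h1 : x * y * (x / y) = x ^ 2 := by field_simp
  rw [h1, Real.sqrt_sq hx]

lemma smat_isHermitian (b c : ℕ → ℕ) (t : ℕ) : (Smat b c t).IsHermitian := by
  show (Smat b c t).conjTranspose = Smat b c t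
  ext i j
  rw [Matrix.conjTranspose_apply]
  show (star (Smat b c t j i) : ℝ) = Smat b c t i j
  rw [star_trivial]
  unfold Smat
  rcases Nat.lt_trichotomy ((i : ℕ)) ((j : ℕ)) with hlt | heq | hgt
  · by_cases h1 : (j : ℕ) = (i : ℕ) + 1
    · rw [if_pos h1, if_neg (by omega), if_neg (by omega), if_pos h1]
      rw [show (j : ℕ) - 1 = (i : ℕ) from by omega, h1]
    · rw [if_neg h1, if_neg (by omega), if_neg (by omega), if_neg (by omega),
        if_neg (by omega), if_neg h1]
  · rw [if_neg (by omega), if_pos heq.symm, if_neg (by omega), if_pos heq]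
    rw [heq]
  · by_cases h1 : (i : ℕ) = (j : ℕ) + 1
    · rw [if_neg (by omega), if_neg (by omega), if_pos h1, if_pos h1]
      rw [show (i : ℕ) - 1 = (j : ℕ) from by omega, h1]
    · rw [if_neg (by omega), if_neg (by omega), if_neg h1, if_neg h1,
        if_neg (by omega), if_neg (by omega)]

open Matrix in
lemma exists_eigenvalue_rayleigh {n : ℕ} (S : Matrix (Fin (n+1)) (Fin (n+1)) ℝ)
    (hS : S.IsHermitian) (u : Fin (n+1) → ℝ) :
    ∃ i, u ⬝ᵥ S.mulVec u ≤ hS.eigenvalues i * (u ⬝ᵥ u) := by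
  classical
  set B := hS.eigenvectorBasis with hB
  set lam := hS.eigenvalues with hlam
  set u' : EuclideanSpace ℝ (Fin (n+1)) := WithLp.toLp 2 u with hu'
  set cc : Fin (n+1) → ℝ := fun i => B.repr u' i with hcc
  -- expansion of u
  have F1 : ∀ j, u j = ∑ i, cc i * B i j := by
    intro j
    have h0 := B.sum_repr u'
    have h1 := congrFun (congrArg (fun (x : EuclideanSpace ℝ (Fin (n+1))) => (x : Fin (n+1) → ℝ)) h0) j
    have h2 : (∑ i, B.repr u' i • B i : EuclideanSpace ℝ (Fin (n+1))) j = ∑ i, cc i * B i j := by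
      induction (Finset.univ : Finset (Fin (n+1))) using Finset.induction with
      | empty => simp
      | insert a s hx ih => rw [Finset.sum_insert hx, Finset.sum_insert hx, ← ih]; rfl
    rw [← h2]; exact h1.symm
  -- orthonormality in dot-product form
  have F3 : ∀ i i', (⇑(B i) : Fin (n+1) → ℝ) ⬝ᵥ ⇑(B i') = if i = i' then 1 else 0 := by
    intro i i'
    have := (orthonormal_iff_ite.mp B.orthonormal) i i'
    rw [PiLp.inner_apply] at this
    simpa [dotProduct, RCLike.inner_apply, mul_comm] using this
  -- cc as dot product
  have F4 : ∀ i, (⇑(B i) : Fin (n+1) → ℝ) ⬝ᵥ u = cc i := by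
    intro i
    have := B.repr_apply_apply u' i
    rw [PiLp.inner_apply] at this
    simp only [RCLike.inner_apply, starRingEnd_apply, star_trivial] at this
    simpa [hcc, dotProduct, hu', mul_comm] using this.symm
  -- action of S on u
  have F2 : ∀ j, S.mulVec u j = ∑ i, cc i * (lam i * B i j) := by
    intro j
    have hmv : ∀ i, S.mulVec (⇑(B i)) = fun j => lam i * B i j := by
      intro i
      have := hS.mulVec_eigenvectorBasis i
      funext j'
      have := congrFun this j'
      simpa using this
    calc S.mulVec u j = ∑ k, S j k * u k := rfl
      _ = ∑ k, S j k * ∑ i, cc i * B i k := by simp_rw [← F1]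
      _ = ∑ k, ∑ i, cc i * (S j k * B i k) := by
          congr 1; funext k; rw [Finset.mul_sum]; congr 1; funext i; ring
      _ = ∑ i, ∑ k, cc i * (S j k * B i k) := Finset.sum_comm
      _ = ∑ i, cc i * (lam i * B i j) := by
          congr 1; funext i
          rw [← Finset.mul_sum]
          congr 1
          have := congrFun (hmv i) j
          simpa [Matrix.mulVec, dotProduct] using this
  -- dot products in eigencoordinates
  have G1 : u ⬝ᵥ S.mulVec u = ∑ i, lam i * cc i ^ 2 := by
    calc u ⬝ᵥ S.mulVec u = ∑ j, u j * ∑ i, cc i * (lam i * B i j) := by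
          simp [dotProduct, F2]
      _ = ∑ j, ∑ i, cc i * lam i * (B i j * u j) := by
          congr 1; funext j; rw [Finset.mul_sum]; congr 1; funext i; ring
      _ = ∑ i, ∑ j, cc i * lam i * (B i j * u j) := Finset.sum_comm
      _ = ∑ i, lam i * cc i ^ 2 := by
          congr 1; funext i
          rw [← Finset.mul_sum]
          have : ∑ j, B i j * u j = cc i := F4 i
          rw [this]; ring
  have G2 : u ⬝ᵥ u = ∑ i, cc i ^ 2 := by
    calc u ⬝ᵥ u = ∑ j, u j * ∑ i, cc i * B i j := by simp [dotProduct, ← F1]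
      _ = ∑ j, ∑ i, cc i * (B i j * u j) := by
          congr 1; funext j; rw [Finset.mul_sum]; congr 1; funext i; ring
      _ = ∑ i, ∑ j, cc i * (B i j * u j) := Finset.sum_comm
      _ = ∑ i, cc i ^ 2 := by
          congr 1; funext i
          rw [← Finset.mul_sum]
          have h5 : ∑ j, B i j * u j = cc i := F4 i
          rw [h5]; ring
  obtain ⟨i0, -, hi0⟩ := Finset.exists_max_image (Finset.univ : Finset (Fin (n+1))) lam ⟨0, Finset.mem_univ 0⟩
  refine ⟨i0, ?_⟩
  rw [G1, G2, Finset.mul_sum]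
  apply Finset.sum_le_sum
  intro i _
  have h1 : lam i ≤ lam i0 := hi0 i (Finset.mem_univ i)
  nlinarith [sq_nonneg (cc i)]

open Matrix in
lemma tridiag_mulVec {n : ℕ} (f g e : ℕ → ℝ) (U : ℕ → ℝ)
    (M : Matrix (Fin (n+1)) (Fin (n+1)) ℝ)
    (hM : ∀ i j : Fin (n+1), M i j =
      if (i : ℕ) = (j : ℕ) + 1 then f (i : ℕ)
      else if (i : ℕ) = (j : ℕ) then g (i : ℕ)
      else if (j : ℕ) = (i : ℕ) + 1 then e (i : ℕ) else 0)
    (j : Fin (n+1)) :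
    M.mulVec (fun k => U (k : ℕ)) j =
      (if 0 < (j : ℕ) then f (j : ℕ) * U ((j : ℕ) - 1) else 0)
      + g (j : ℕ) * U (j : ℕ)
      + (if (j : ℕ) < n then e (j : ℕ) * U ((j : ℕ) + 1) else 0) := by
  classical
  have key : M.mulVec (fun k => U (k : ℕ)) j =
      ∑ k ∈ Finset.range (n+1),
        ((if (j : ℕ) = k + 1 then f (j : ℕ) * U k else 0)
         + (if k = (j : ℕ) then g (j : ℕ) * U k else 0)
         + (if k = (j : ℕ) + 1 then e (j : ℕ) * U k else 0)) := by
    rw [Matrix.mulVec, show (fun k : Fin (n+1) => U (k : ℕ)) = fun k : Fin (n+1) => U (k : ℕ) from rfl]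
    rw [dotProduct]
    rw [← Fin.sum_univ_eq_sum_range (fun k =>
        ((if (j : ℕ) = k + 1 then f (j : ℕ) * U k else 0)
         + (if k = (j : ℕ) then g (j : ℕ) * U k else 0)
         + (if k = (j : ℕ) + 1 then e (j : ℕ) * U k else 0)))]
    congr 1; funext k
    rw [hM j k]
    rcases Nat.lt_trichotomy ((j : ℕ)) ((k : ℕ)) with hlt | heq | hgt
    · by_cases hk : (k : ℕ) = (j : ℕ) + 1 <;> split_ifs <;> first | omega | ring1
    · split_ifs <;> first | omega | ring1
    · by_cases hk : (j : ℕ) = (k : ℕ) + 1 <;> split_ifs <;> first | omega | ring1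
  rw [key, Finset.sum_add_distrib, Finset.sum_add_distrib]
  congr 1
  · congr 1
    · -- subdiagonal term
      rcases Nat.eq_zero_or_pos (j : ℕ) with h0 | hpos
      · rw [h0]; simp
      · obtain ⟨jj, hjj⟩ : ∃ jj, (j : ℕ) = jj + 1 := ⟨(j : ℕ) - 1, by omega⟩
        rw [hjj]
        have : ∀ k ∈ Finset.range (n+1),
            (if jj + 1 = k + 1 then f (jj+1) * U k else 0)
            = (if k = jj then f (jj+1) * U k else 0) := by
          intro k _; split_ifs <;> first | rfl | omega
        rw [Finset.sum_congr rfl this, Finset.sum_ite_eq' (Finset.range (n+1)) jj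
          (fun k => f (jj+1) * U k)]
        have hmem : jj ∈ Finset.range (n+1) := Finset.mem_range.mpr (by have := j.isLt; omega)
        simp [hmem, hpos, hjj]
    · rw [Finset.sum_ite_eq' (Finset.range (n+1)) ((j : ℕ)) (fun k => g (j : ℕ) * U k)]
      simp [Finset.mem_range.mpr j.isLt]
  · rw [Finset.sum_ite_eq' (Finset.range (n+1)) ((j : ℕ) + 1) (fun k => e (j : ℕ) * U k)]
    have := j.isLt
    by_cases hj : (j : ℕ) < n
    · simp [Finset.mem_range.mpr (by omega : (j:ℕ)+1 < n+1), hj]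
    · have : ¬ ((j:ℕ) + 1 ∈ Finset.range (n+1)) := by simp; omega
      simp [this, hj]

lemma dSeq_pos (b c : ℕ → ℕ) (t : ℕ) (hb : ∀ i ≤ t, 1 ≤ b i)
    (hc : ∀ i, 1 ≤ i → i ≤ t → 1 ≤ c i) : ∀ i ≤ t, 0 < dSeq b c i := by
  intro i
  induction i with
  | zero => intro _; rw [dSeq]; norm_num
  | succ i ih =>
      intro hi
      rw [dSeq]
      have h1 : 0 < dSeq b c i := ih (by omega)
      have h2 : (0:ℝ) < (b i : ℝ) := by
        have := hb i (by omega); exact_mod_cast Nat.lt_of_lt_of_le Nat.zero_lt_one this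
      have h3 : (0:ℝ) < (c (i+1) : ℝ) := by
        have := hc (i+1) (by omega) hi; exact_mod_cast Nat.lt_of_lt_of_le Nat.zero_lt_one this
      have : 0 < Real.sqrt ((b i : ℝ) / (c (i+1) : ℝ)) :=
        Real.sqrt_pos.mpr (div_pos h2 h3)
      positivity

lemma dL_eq_Sd (b c : ℕ → ℕ) (t : ℕ) (hb : ∀ i ≤ t, 1 ≤ b i)
    (hc : ∀ i, 1 ≤ i → i ≤ t → 1 ≤ c i) (i j : Fin (t+1)) :
    dSeq b c (i : ℕ) * Lmat b c t i j = Smat b c t i j * dSeq b c (j : ℕ) := by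
  have hbpos : ∀ i' ≤ t, (0:ℝ) < (b i' : ℝ) := fun i' hi' => by
    have := hb i' hi'; exact_mod_cast Nat.lt_of_lt_of_le Nat.zero_lt_one this
  have hcpos : ∀ i', 1 ≤ i' → i' ≤ t → (0:ℝ) < (c i' : ℝ) := fun i' h1 h2 => by
    have := hc i' h1 h2; exact_mod_cast Nat.lt_of_lt_of_le Nat.zero_lt_one this
  unfold Lmat Smat
  rcases Nat.lt_trichotomy ((i : ℕ)) ((j : ℕ)) with hlt | heq | hgt
  · by_cases h1 : (j : ℕ) = (i : ℕ) + 1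
    · rw [if_neg (by omega), if_neg (by omega), if_pos h1,
        if_neg (by omega), if_neg (by omega), if_pos h1]
      -- d i * b i = sqrt (b i * c (i+1)) * d (i+1)
      rw [h1, dSeq]
      have h2 := hbpos (i : ℕ) (by have := j.isLt; omega)
      have h3 := hcpos ((i : ℕ) + 1) (by omega) (by have := j.isLt; omega)
      rw [show dSeq b c (i:ℕ) * Real.sqrt ((b (i:ℕ) : ℝ) / (c ((i:ℕ)+1) : ℝ))
            = Real.sqrt ((b (i:ℕ) : ℝ) / (c ((i:ℕ)+1) : ℝ)) * dSeq b c (i:ℕ) from mul_comm _ _]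
      rw [← mul_assoc]
      rw [sqrt_mul_sqrt_div h2.le h3]
      ring
    · rw [if_neg (by omega), if_neg (by omega), if_neg h1,
        if_neg (by omega), if_neg (by omega), if_neg h1]
      ring
  · rw [if_neg (by omega), if_pos heq, if_neg (by omega), if_pos heq, heq]
    ring
  · by_cases h1 : (i : ℕ) = (j : ℕ) + 1
    · rw [if_pos h1, if_pos h1]
      -- d (j+1) * c (j+1) = sqrt (b j * c (j+1)) * d j
      rw [h1, dSeq, show (j:ℕ) + 1 - 1 = (j:ℕ) from by omega]
      have h2 := hbpos (j : ℕ) (by have := i.isLt; omega)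
      have h3 := hcpos ((j : ℕ) + 1) (by omega) (by have := i.isLt; omega)
      rw [mul_assoc, sqrt_div_mul h2.le h3]
      ring
    · rw [if_neg h1, if_neg (by omega), if_neg (by omega),
        if_neg h1, if_neg (by omega), if_neg (by omega)]
      ring

open Matrix in
lemma eigen_transfer (b c : ℕ → ℕ) (t : ℕ) (hb : ∀ i ≤ t, 1 ≤ b i)
    (hc : ∀ i, 1 ≤ i → i ≤ t → 1 ≤ c i) (i : Fin (t+1)) :
    IsMatEigenvalue (Lmat b c t) ((smat_isHermitian b c t).eigenvalues i) := by
  classical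
  set hS := smat_isHermitian b c t
  set lam := hS.eigenvalues i with hlam
  set e : Fin (t+1) → ℝ := ⇑(hS.eigenvectorBasis i) with he
  have hd : ∀ k : Fin (t+1), 0 < dSeq b c (k : ℕ) := fun k =>
    dSeq_pos b c t hb hc (k : ℕ) (by have := k.isLt; omega)
  refine ⟨fun j => e j / dSeq b c (j : ℕ), ?_, ?_⟩
  · intro hv0
    have he0 : hS.eigenvectorBasis i = 0 := by
      ext j
      have := congrFun hv0 j
      simp only [Pi.zero_apply] at this
      have := div_eq_zero_iff.mp this
      rcases this with h | h
      · exact h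
      · exact absurd h (hd j).ne'
    exact hS.eigenvectorBasis.orthonormal.ne_zero i he0
  · funext j
    have hmv := hS.mulVec_eigenvectorBasis i
    have hSe : ∀ j', (Smat b c t).mulVec e j' = lam * e j' := by
      intro j'
      have := congrFun hmv j'
      simpa using this
    have hk : ∀ k : Fin (t+1), Lmat b c t j k * (e k / dSeq b c (k : ℕ))
        = (Smat b c t j k * e k) / dSeq b c (j : ℕ) := by
      intro k
      have hid := dL_eq_Sd b c t hb hc j k
      have hdj := (hd j).ne'
      have hdk := (hd k).ne'
      field_simp
      calc Lmat b c t j k * e k * dSeq b c (j:ℕ)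
          = (dSeq b c (j:ℕ) * Lmat b c t j k) * e k := by ring
        _ = (Smat b c t j k * dSeq b c (k:ℕ)) * e k := by rw [hid]
        _ = e k * dSeq b c (k:ℕ) * Smat b c t j k := by ring
    calc (Lmat b c t).mulVec (fun k => e k / dSeq b c (k:ℕ)) j
        = ∑ k, Lmat b c t j k * (e k / dSeq b c (k:ℕ)) := rfl
      _ = ∑ k, (Smat b c t j k * e k) / dSeq b c (j : ℕ) := by
          exact Finset.sum_congr rfl fun k _ => hk k
      _ = (∑ k, Smat b c t j k * e k) / dSeq b c (j : ℕ) := by rw [Finset.sum_div]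
      _ = ((Smat b c t).mulVec e j) / dSeq b c (j : ℕ) := rfl
      _ = (lam * e j) / dSeq b c (j : ℕ) := by rw [hSe j]
      _ = lam * (e j / dSeq b c (j : ℕ)) := by ring

lemma hseq_exists (b c : ℕ → ℕ) (t : ℕ) (ht : 1 ≤ t) (hc0 : c 0 = 0)
    (hb : ∀ i ≤ t, 1 ≤ b i) (hc : ∀ i, 1 ≤ i → i ≤ t → 1 ≤ c i) :
    ∃ j, j ≤ t ∧ hSeq b c ((b 0 : ℝ) - (b t : ℝ) + 1/(2*(b (t-1) : ℝ))) j ≤ 0 := by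
  set Beta : ℝ := (b (t-1) : ℝ) with hBeta
  set eps : ℝ := 1/(2*Beta) with heps
  set al : ℝ := (b 0 : ℝ) - (b t : ℝ) + eps with hal
  have hBeta1 : (1:ℝ) ≤ Beta := by rw [hBeta]; exact_mod_cast hb (t-1) (by omega)
  have hepspos : 0 < eps := by rw [heps]; positivity
  have hepshalf : eps ≤ 1/2 := by
    rw [heps]
    rw [div_le_div_iff₀ (by linarith) (by norm_num)]
    linarith
  have hepsBeta : eps * Beta = 1/2 := by
    rw [heps]; field_simp
  have hbt1 : (1:ℝ) ≤ (b t : ℝ) := by exact_mod_cast hb t le_rfl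
  by_contra hno
  push_neg at hno
  have hpos : ∀ j ≤ t, 0 < hSeq b c al j := fun j hj => hno j hj
  have inv : ∀ j, j < t → hSeq b c al j ≤ (b j : ℝ) - (b t : ℝ) + eps := by
    intro j
    induction j with
    | zero =>
        intro _
        have : hSeq b c al 0 = al + (c 0 : ℝ) := by rw [hSeq]; ring
        rw [this, hc0]
        simp [hal]
    | succ j ih =>
        intro hj
        have hjt : j < t := by omega
        have hjle := ih hjt
        have hjpos := hpos j (by omega)
        have hbj1 : (1:ℝ) ≤ (b j : ℝ) := by exact_mod_cast hb j (by omega)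
        have hcj1 : (1:ℝ) ≤ (c (j+1) : ℝ) := by
          exact_mod_cast hc (j+1) (by omega) (by omega)
        have hjb : hSeq b c al j ≤ (b j : ℝ) := by linarith
        have hdiv : (c (j+1) : ℝ) ≤ ((b j : ℝ) * (c (j+1) : ℝ)) / hSeq b c al j := by
          rw [le_div_iff₀ hjpos]
          nlinarith
        rw [hSeq]
        rw [hal]
        linarith
  -- final step at t
  have htpos := hpos t le_rfl
  have hH := hpos (t-1) (by omega)
  have hHle : hSeq b c al (t-1) ≤ Beta - (b t : ℝ) + eps := inv (t-1) (by omega)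
  have hct1 : (1:ℝ) ≤ (c t : ℝ) := by exact_mod_cast hc t ht le_rfl
  have e1 : t - 1 + 1 = t := by omega
  have hht : hSeq b c al t = al - ((b 0:ℝ) - (b t:ℝ) - (c t:ℝ))
      - ((b (t-1) : ℝ) * (c t : ℝ)) / hSeq b c al (t-1) := by
    conv_lhs => rw [← e1]
    rw [hSeq, e1]
  have hHle' : hSeq b c al (t-1) ≤ Beta - 1 + eps := by linarith
  have hfin : hSeq b c al t ≤ 0 := by
    rw [hht]
    have h2 : ((c t : ℝ) + eps) * hSeq b c al (t-1) ≤ Beta * (c t : ℝ) := by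
      have h3 : ((c t : ℝ) + eps) * hSeq b c al (t-1) ≤ ((c t:ℝ) + eps) * (Beta - 1 + eps) := by
        apply mul_le_mul_of_nonneg_left hHle' (by linarith)
      have h4 : ((c t:ℝ) + eps) * (Beta - 1 + eps) ≤ Beta * (c t : ℝ) := by
        nlinarith [sq_nonneg eps, mul_le_mul_of_nonneg_right hepshalf (by linarith : (0:ℝ) ≤ (c t:ℝ) - 1)]
      linarith
    have h5 : (c t : ℝ) + eps ≤ (Beta * (c t:ℝ)) / hSeq b c al (t-1) := by
      rw [le_div_iff₀ hH]
      linarith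
    rw [hal]
    have : Beta = (b (t-1) : ℝ) := rfl
    linarith [h5]
  linarith

open Matrix in
lemma key_lemma (b c : ℕ → ℕ) (t : ℕ) (ht : 1 ≤ t) (hc0 : c 0 = 0)
    (hb : ∀ i ≤ t, 1 ≤ b i) (hc : ∀ i, 1 ≤ i → i ≤ t → 1 ≤ c i)
    (μt : ℝ) (hμ : IsGreatest {μ : ℝ | IsMatEigenvalue (Lmat b c t) μ} μt) :
    (b 0 : ℝ) - (b t : ℝ) < μt := by
  classical
  by_contra hcon
  push_neg at hcon
  have hex := hseq_exists b c t ht hc0 hb hc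
  set eps : ℝ := 1/(2*(b (t-1) : ℝ)) with heps
  set al : ℝ := (b 0 : ℝ) - (b t : ℝ) + eps with hal
  have hBeta1 : (1:ℝ) ≤ (b (t-1) : ℝ) := by exact_mod_cast hb (t-1) (by omega)
  have hepspos : 0 < eps := by rw [heps]; positivity
  set s : ℕ → ℝ := fun i => Real.sqrt ((b i : ℝ) * (c (i+1) : ℝ)) with hs
  set H : ℕ → ℝ := hSeq b c al with hH
  set m : ℕ := Nat.find hex with hmdef
  have hmt : m ≤ t := (Nat.find_spec hex).1
  have hm0 : H m ≤ 0 := (Nat.find_spec hex).2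
  have hmin : ∀ j, j < m → 0 < H j := by
    intro j hj
    by_contra hle
    push_neg at hle
    exact Nat.find_min hex hj ⟨by omega, hle⟩
  set U : ℕ → ℝ := fun j => if j ≤ m then (∏ i ∈ Finset.Ico j m, (s i / H i)) else 0 with hU
  have hUm : U m = 1 := by rw [hU]; simp
  have hUzero : ∀ j, m < j → U j = 0 := by
    intro j hj; rw [hU]; simp only [if_neg (by omega : ¬ j ≤ m)]
  have hUrec : ∀ j, j < m → H j * U j = s j * U (j+1) := by
    intro j hj
    have h1 : U j = (s j / H j) * U (j+1) := by
      rw [hU]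
      simp only [if_pos (by omega : j ≤ m), if_pos (by omega : j + 1 ≤ m)]
      exact Finset.prod_eq_prod_Ico_succ_bot hj _
    rw [h1]
    have := (hmin j hj).ne'
    field_simp
  set u : Fin (t+1) → ℝ := fun k => U (k : ℕ) with hu
  have hune : u ≠ 0 := by
    intro h0
    have := congrFun h0 ⟨m, by omega⟩
    rw [hu] at this
    simp only [Pi.zero_apply] at this
    rw [hUm] at this
    norm_num at this
  set hS := smat_isHermitian b c t with hSdef
  -- mulVec formula
  have htri : ∀ j : Fin (t+1), (Smat b c t).mulVec u j =
      (if 0 < (j:ℕ) then Real.sqrt ((b ((j:ℕ)-1) : ℝ) * (c (j:ℕ) : ℝ)) * U ((j:ℕ)-1) else 0)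
      + ((b 0 : ℝ) - (b (j:ℕ) : ℝ) - (c (j:ℕ) : ℝ)) * U (j:ℕ)
      + (if (j:ℕ) < t then s (j:ℕ) * U ((j:ℕ)+1) else 0) := by
    intro j
    exact tridiag_mulVec (fun i => Real.sqrt ((b (i-1) : ℝ) * (c i : ℝ)))
      (fun i => (b 0 : ℝ) - (b i : ℝ) - (c i : ℝ)) s U (Smat b c t)
      (fun i j => rfl) j
  -- pointwise identity
  have key2 : ∀ j : Fin (t+1), u j * (Smat b c t).mulVec u j
      = al * U (j:ℕ)^2 - (if (j:ℕ) = m then H m else 0) := by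
    intro j
    rw [htri j]
    have hjt : (j : ℕ) ≤ t := by have := j.isLt; omega
    rcases lt_trichotomy ((j:ℕ)) m with hjm | hjm | hjm
    · -- j < m
      rw [if_neg (by omega : ¬ (j:ℕ) = m), if_pos (by omega : (j:ℕ) < t)]
      rcases Nat.eq_zero_or_pos (j:ℕ) with hj0 | hjpos
      · rw [hj0]
        rw [if_neg (by omega : ¬ (0:ℕ) > 0)]
        have hrec := hUrec 0 (by omega)
        have hH0 : H 0 = al - ((b 0 : ℝ) - (b 0 : ℝ) - (c 0 : ℝ)) := by rw [hH, hSeq]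
        rw [hu]
        simp only [hj0]
        rw [← hrec, hH0]
        ring
      · obtain ⟨jj, hjj⟩ : ∃ jj, (j:ℕ) = jj + 1 := ⟨(j:ℕ) - 1, by omega⟩
        rw [if_pos hjpos]
        have hjjm : jj < m := by omega
        have hne := (hmin jj hjjm).ne'
        have h4 : s jj * s jj = (b jj : ℝ) * (c (jj+1) : ℝ) := by
          rw [hs]; exact Real.mul_self_sqrt (by positivity)
        have h5 : Real.sqrt ((b ((j:ℕ)-1) : ℝ) * (c (j:ℕ) : ℝ)) * U ((j:ℕ)-1)
            = ((b jj : ℝ) * (c (jj+1) : ℝ)) * U (j:ℕ) / H jj := by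
          rw [hjj, show jj + 1 - 1 = jj from rfl]
          rw [eq_div_iff hne]
          have : Real.sqrt ((b jj : ℝ) * (c (jj+1) : ℝ)) = s jj := rfl
          rw [this]
          calc s jj * U jj * H jj = s jj * (H jj * U jj) := by ring
            _ = s jj * (s jj * U (jj+1)) := by rw [hUrec jj hjjm]
            _ = (s jj * s jj) * U (jj+1) := by ring
            _ = (b jj : ℝ) * (c (jj+1) : ℝ) * U (jj+1) := by rw [h4]
        have h6 : H (j:ℕ) = al - ((b 0:ℝ) - (b (j:ℕ) : ℝ) - (c (j:ℕ) : ℝ))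
            - ((b jj : ℝ) * (c (jj+1) : ℝ)) / H jj := by
          rw [hH, hjj, hSeq]
        rw [h5, ← hUrec (j:ℕ) hjm, h6, hu]
        simp only
        rw [hjj]
        field_simp
        ring
    · -- j = m
      rw [if_pos hjm]
      have hsup : (if (j:ℕ) < t then s (j:ℕ) * U ((j:ℕ)+1) else 0) = 0 := by
        split_ifs with hc1
        · rw [hjm, hUzero (m+1) (by omega)]; ring
        · rfl
      rw [hsup, hu]
      simp only
      rw [hjm, hUm]
      rcases Nat.eq_zero_or_pos m with hm00 | hmpos
      · rw [hm00]
        rw [if_neg (by omega : ¬ (0:ℕ) > 0)]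
        have hH0 : H 0 = al - ((b 0 : ℝ) - (b 0 : ℝ) - (c 0 : ℝ)) := by rw [hH, hSeq]
        rw [hm00] at *
        rw [hH0]
        ring
      · obtain ⟨mm, hmm⟩ : ∃ mm, m = mm + 1 := ⟨m - 1, by omega⟩
        rw [if_pos hmpos]
        have hne := (hmin mm (by omega)).ne'
        have h4 : s mm * s mm = (b mm : ℝ) * (c (mm+1) : ℝ) := by
          rw [hs]; exact Real.mul_self_sqrt (by positivity)
        have h5 : Real.sqrt ((b (m-1) : ℝ) * (c m : ℝ)) * U (m-1)
            = ((b mm : ℝ) * (c (mm+1) : ℝ)) / H mm := by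
          rw [hmm, show mm + 1 - 1 = mm from rfl]
          rw [eq_div_iff hne]
          have hrs : Real.sqrt ((b mm : ℝ) * (c (mm+1) : ℝ)) = s mm := rfl
          rw [hrs]
          calc s mm * U mm * H mm = s mm * (H mm * U mm) := by ring
            _ = s mm * (s mm * U (mm+1)) := by rw [hUrec mm (by omega)]
            _ = (s mm * s mm) * U (mm+1) := by ring
            _ = (b mm : ℝ) * (c (mm+1) : ℝ) * U (mm+1) := by rw [h4]
            _ = (b mm : ℝ) * (c (mm+1) : ℝ) := by rw [← hmm, hUm]; ring
        have h6 : H m = al - ((b 0:ℝ) - (b m : ℝ) - (c m : ℝ))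
            - ((b mm : ℝ) * (c (mm+1) : ℝ)) / H mm := by
          rw [hH, hmm, hSeq]
        rw [h5, h6]
        field_simp
        ring
    · -- m < j
      rw [if_neg (by omega : ¬ (j:ℕ) = m), hu]
      simp only
      rw [hUzero (j:ℕ) hjm]
      ring
  -- sum up
  have hsum : u ⬝ᵥ (Smat b c t).mulVec u = al * (u ⬝ᵥ u) - H m := by
    have e1 : u ⬝ᵥ (Smat b c t).mulVec u
        = ∑ j : Fin (t+1), (al * U (j:ℕ)^2 - (if (j:ℕ) = m then H m else 0)) := by
      rw [dotProduct]
      exact Finset.sum_congr rfl fun j _ => key2 j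
    rw [e1, Finset.sum_sub_distrib]
    have e2 : ∑ j : Fin (t+1), (if (j:ℕ) = m then H m else 0) = H m := by
      have e3 : ∀ j : Fin (t+1), (if (j:ℕ) = m then H m else 0)
          = (if j = (⟨m, by omega⟩ : Fin (t+1)) then H m else 0) := by
        intro j
        simp [Fin.ext_iff]
      rw [Finset.sum_congr rfl fun j _ => e3 j]
      rw [Finset.sum_ite_eq' Finset.univ (⟨m, by omega⟩ : Fin (t+1)) (fun _ => H m)]
      simp
    rw [e2]
    have e4 : u ⬝ᵥ u = ∑ j : Fin (t+1), U (j:ℕ)^2 := by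
      rw [dotProduct]
      exact Finset.sum_congr rfl fun j _ => by rw [hu]; simp only; ring
    rw [e4, Finset.mul_sum]
  -- Rayleigh and conclusion
  obtain ⟨i, hiR⟩ := exists_eigenvalue_rayleigh (Smat b c t) hS u
  have heigle : hS.eigenvalues i ≤ μt := hμ.2 (eigen_transfer b c t hb hc i)
  have huu : (1:ℝ) ≤ u ⬝ᵥ u := by
    have e4 : u ⬝ᵥ u = ∑ j : Fin (t+1), U (j:ℕ)^2 := by
      rw [dotProduct]
      exact Finset.sum_congr rfl fun j _ => by rw [hu]; simp only; ring
    rw [e4]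
    have hle : U ((⟨m, by omega⟩ : Fin (t+1)) : ℕ)^2
        ≤ ∑ j : Fin (t+1), U (j:ℕ)^2 :=
      Finset.single_le_sum (f := fun j : Fin (t+1) => U (j:ℕ)^2)
        (fun j _ => sq_nonneg _) (Finset.mem_univ (⟨m, by omega⟩ : Fin (t+1)))
    rw [show ((⟨m, by omega⟩ : Fin (t+1)) : ℕ) = m from rfl, hUm] at hle
    norm_num at hle
    exact hle
  have hfin : al * (u ⬝ᵥ u) - H m ≤ ((b 0 : ℝ) - (b t : ℝ)) * (u ⬝ᵥ u) := by
    calc al * (u ⬝ᵥ u) - H m = u ⬝ᵥ (Smat b c t).mulVec u := hsum.symm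
      _ ≤ hS.eigenvalues i * (u ⬝ᵥ u) := hiR
      _ ≤ ((b 0 : ℝ) - (b t : ℝ)) * (u ⬝ᵥ u) := by
          apply mul_le_mul_of_nonneg_right (le_trans heigle hcon) (by linarith)
  rw [hal] at hfin
  nlinarith



lemma exists_adj_dist {V : Type*} {G : SimpleGraph V} (hconn : G.Connected)
    (x y : V) (n : ℕ) (hd : G.dist x y = n + 1) :
    ∃ w, G.Adj y w ∧ G.dist x w = n := by
  have hne : G.dist y x ≠ 0 := by rw [SimpleGraph.dist_comm, hd]; omega
  obtain ⟨q, hq⟩ := SimpleGraph.exists_walk_of_dist_ne_zero hne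
  cases q with
  | nil =>
      rw [SimpleGraph.Walk.length_nil] at hq
      rw [SimpleGraph.dist_comm, hd] at hq
      omega
  | cons hadj q' =>
      rename_i w
      rw [SimpleGraph.Walk.length_cons, SimpleGraph.dist_comm, hd] at hq
      refine ⟨w, hadj, ?_⟩
      have h1 : G.dist x w ≤ n := by
        have := SimpleGraph.dist_le q'.reverse
        rw [SimpleGraph.Walk.length_reverse] at this
        omega
      have h2 : G.dist w y ≤ 1 := by
        rw [SimpleGraph.dist_eq_one_iff_adj.mpr hadj.symm]
      have h3 := hconn.dist_triangle (u := x) (v := w) (w := y)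
      omega

lemma exists_dist_intermediate {V : Type*} {G : SimpleGraph V} (hconn : G.Connected)
    (x y : V) (n : ℕ) (hd : G.dist x y = n) :
    ∀ i ≤ n, ∃ z, G.dist x z = i ∧ G.dist z y = n - i := by
  intro i
  induction i with
  | zero =>
      intro _
      exact ⟨x, SimpleGraph.dist_self, by simpa using hd⟩
  | succ i ih =>
      intro hi
      obtain ⟨z, hz1, hz2⟩ := ih (by omega)
      have hzy : G.dist y z = (n - i - 1) + 1 := by
        rw [SimpleGraph.dist_comm] at hz2
        omega
      obtain ⟨w, hwz, hyw⟩ := exists_adj_dist hconn y z (n - i - 1) hzy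
      have h1 : G.dist x w ≤ i + 1 := by
        have h3 := hconn.dist_triangle (u := x) (v := z) (w := w)
        have h2 : G.dist z w ≤ 1 := by
          rw [SimpleGraph.dist_eq_one_iff_adj.mpr hwz]
        omega
      have h2 : i + 1 ≤ G.dist x w := by
        have h3 := hconn.dist_triangle (u := x) (v := w) (w := y)
        have h4 : G.dist w y = n - i - 1 := by rw [SimpleGraph.dist_comm]; exact hyw
        omega
      refine ⟨w, by omega, ?_⟩
      rw [SimpleGraph.dist_comm]
      omega

/-- For `1 ≤ t ≤ D - 1`, the largest eigenvalue `μ_t` of the tridiagonal matrix `L_Γ(t)`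
satisfies `μ_t > a_t + c_t`, where `a_t = k - b_t - c_t`. -/
theorem mu_t_gt_a_t_add_c_t {V : Type} [Fintype V] (G : SimpleGraph V) (D : ℕ)
    (b c : ℕ → ℕ) (h : IsDRG G D b c) (t : ℕ) (ht : 1 ≤ t) (htD : t + 1 ≤ D)
    (μt : ℝ) (hμ : IsGreatest {μ : ℝ | IsMatEigenvalue (Lmat b c t) μ} μt) :
    ((b 0 : ℝ) - (b t : ℝ) - (c t : ℝ)) + (c t : ℝ) < μt := by
  classical
  have hconn := h.connected
  have hbpos : ∀ i, i + 1 ≤ D → 1 ≤ b i := by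
    intro i hi
    obtain ⟨x, y, hxy⟩ := h.exists_dist_eq
    obtain ⟨z, hz1, hz2⟩ := exists_dist_intermediate hconn x y D hxy (i+1) hi
    obtain ⟨w, hwz, hwx⟩ := exists_adj_dist hconn x z i hz1
    have hcount := h.count_b i (by omega) x w hwx
    have hpos : 0 < {v : V | G.Adj w v ∧ G.dist x v = i + 1}.ncard :=
      (Set.ncard_pos (Set.toFinite _)).mpr ⟨z, hwz.symm, hz1⟩
    omega
  have hcpos : ∀ i, 1 ≤ i → i ≤ D → 1 ≤ c i := by
    intro i h1 h2
    obtain ⟨x, y, hxy⟩ := h.exists_dist_eq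
    obtain ⟨z, hz1, hz2⟩ := exists_dist_intermediate hconn x y D hxy i h2
    obtain ⟨i', hi'⟩ : ∃ i', i = i' + 1 := ⟨i - 1, by omega⟩
    obtain ⟨w, hwz, hwx⟩ := exists_adj_dist hconn x z i' (by rw [hz1, hi'])
    have hcount := h.count_c i h2 x z hz1
    have hpos : 0 < {v : V | G.Adj z v ∧ G.dist x v = i - 1}.ncard :=
      (Set.ncard_pos (Set.toFinite _)).mpr ⟨w, hwz, by rw [hwx]; omega⟩
    omega
  have hkey := key_lemma b c t ht h.c_zero
    (fun i hi => hbpos i (by omega)) (fun i h1 h2 => hcpos i h1 (by omega)) μt hμ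
  linarith
end

section
/- Let Γ be a distance-regular graph with diameter D ≥ 2t + 2 for some positive integer t. Then the second largest eigenvalue θ₁ of Γ satisfies θ₁ > a_t + c_t. Formally: there is an eigenvalue θ of the adjacency matrix of Γ with θ < k and θ > a_t + c_t. -/
open SimpleGraph

section Aux

open Finset Matrix

variable {V : Type} [Fintype V] {G : SimpleGraph V} {D : ℕ} {b c : ℕ → ℕ}

/-- In a distance-regular graph every vertex has degree `b 0`. -/
private lemma IsDRG.degree_eq [DecidableRel G.Adj] (h : IsDRG G D b c) (z : V) :
    G.degree z = b 0 := by
  have h0 := h.count_b 0 (Nat.zero_le D) z z SimpleGraph.dist_self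
  simp only [zero_add, SimpleGraph.dist_eq_one_iff_adj, and_self] at h0
  rw [← h0, show {w : V | G.Adj z w} = ↑(G.neighborFinset z) by ext w; simp,
    Set.ncard_coe_finset]
  rfl

set_option linter.unusedSectionVars false in
/-- Vertices along a geodesic walk realize all intermediate distances. -/
private lemma geodesic_dist {x y : V} (hc : G.Connected) (p : G.Walk x y)
    (hp : p.length = G.dist x y) {i : ℕ} (hi : i ≤ p.length) :
    G.dist x (p.getVert i) = i := by
  have up : ∀ j : ℕ, G.dist x (p.getVert j) ≤ j := by
    intro j
    induction j with
    | zero => simp [p.getVert_zero]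
    | succ n ih =>
      by_cases hn : n < p.length
      · have hadj := p.adj_getVert_succ hn
        have h1 : G.dist (p.getVert n) (p.getVert (n + 1)) = 1 :=
          SimpleGraph.dist_eq_one_iff_adj.2 hadj
        have h2 : G.dist x (p.getVert (n + 1)) ≤
            G.dist x (p.getVert n) + G.dist (p.getVert n) (p.getVert (n + 1)) :=
          hc.dist_triangle
        omega
      · rw [p.getVert_of_length_le (by omega)]
        rw [p.getVert_of_length_le (by omega : p.length ≤ n)] at ih
        omega
  have down : ∀ j : ℕ, G.dist (p.getVert (p.length - j)) y ≤ j := by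
    intro j
    induction j with
    | zero => simp [p.getVert_length]
    | succ n ih =>
      by_cases hn : p.length ≤ n
      · rw [show p.length - (n + 1) = p.length - n by omega]
        omega
      · have hlt : p.length - (n + 1) < p.length := by omega
        have hadj := p.adj_getVert_succ hlt
        rw [show p.length - (n + 1) + 1 = p.length - n by omega] at hadj
        have h1 : G.dist (p.getVert (p.length - (n + 1))) (p.getVert (p.length - n)) = 1 :=
          SimpleGraph.dist_eq_one_iff_adj.2 hadj
        have h2 : G.dist (p.getVert (p.length - (n + 1))) y ≤
            G.dist (p.getVert (p.length - (n + 1))) (p.getVert (p.length - n)) +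
              G.dist (p.getVert (p.length - n)) y := hc.dist_triangle
        omega
  have tri : G.dist x y ≤ G.dist x (p.getVert i) + G.dist (p.getVert i) y := hc.dist_triangle
  have hd := down (p.length - i)
  rw [show p.length - (p.length - i) = i by omega] at hd
  have h1 := up i
  omega

/-- The intersection numbers `b i` are positive for `i < D`. -/
private lemma IsDRG.b_pos (h : IsDRG G D b c) {i : ℕ} (hi : i + 1 ≤ D) : 1 ≤ b i := by
  obtain ⟨x, y, hxy⟩ := h.exists_dist_eq
  obtain ⟨p, hp⟩ := (h.connected.preconnected x y).exists_walk_length_eq_dist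
  have hplen : p.length = D := by rw [hp, hxy]
  have hu : G.dist x (p.getVert i) = i := geodesic_dist h.connected p hp (by omega)
  have hv : G.dist x (p.getVert (i + 1)) = i + 1 := geodesic_dist h.connected p hp (by omega)
  have hadj : G.Adj (p.getVert i) (p.getVert (i + 1)) := p.adj_getVert_succ (by omega)
  have hcount := h.count_b i (by omega) x (p.getVert i) hu
  have hne : {z : V | G.Adj (p.getVert i) z ∧ G.dist x z = i + 1}.Nonempty :=
    ⟨p.getVert (i + 1), hadj, hv⟩
  have hpos := (Set.ncard_pos (Set.toFinite _)).2 hne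
  omega

private lemma innerdeg_lt [DecidableEq V] [DecidableRel G.Adj] (h : IsDRG G D b c) {t : ℕ} {x z : V}
    (S : Finset V) (hS : ∀ w, w ∈ S ↔ G.dist x w ≤ t) (hz : G.dist x z < t) :
    G.neighborFinset z ∩ S = G.neighborFinset z := by
  ext w
  simp only [Finset.mem_inter, SimpleGraph.mem_neighborFinset, hS w, and_iff_left_iff_imp]
  intro hadj
  have h1 : G.dist z w = 1 := SimpleGraph.dist_eq_one_iff_adj.2 hadj
  have h2 : G.dist x w ≤ G.dist x z + G.dist z w := h.connected.dist_triangle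
  omega

private lemma innerdeg_eq [DecidableEq V] [DecidableRel G.Adj] (h : IsDRG G D b c) {t : ℕ} (htD : t ≤ D)
    {x z : V} (S : Finset V) (hS : ∀ w, w ∈ S ↔ G.dist x w ≤ t) (hz : G.dist x z = t) :
    (G.neighborFinset z ∩ S).card + b t = b 0 := by
  classical
  have hnb : ∀ w, G.Adj z w → G.dist x w ≤ t + 1 := by
    intro w hadj
    have h1 : G.dist z w = 1 := SimpleGraph.dist_eq_one_iff_adj.2 hadj
    have h2 : G.dist x w ≤ G.dist x z + G.dist z w := h.connected.dist_triangle
    omega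
  have e1 : G.neighborFinset z ∩ S = (G.neighborFinset z).filter (fun w => G.dist x w ≤ t) := by
    ext w
    simp only [Finset.mem_inter, SimpleGraph.mem_neighborFinset, hS w, Finset.mem_filter]
  have e2 : (G.neighborFinset z).filter (fun w => ¬ G.dist x w ≤ t) =
      (G.neighborFinset z).filter (fun w => G.dist x w = t + 1) := by
    ext w
    simp only [Finset.mem_filter, SimpleGraph.mem_neighborFinset]
    constructor
    · rintro ⟨ha, hd⟩
      exact ⟨ha, by have := hnb w ha; omega⟩
    · rintro ⟨ha, hd⟩
      exact ⟨ha, by omega⟩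
  have e3 : ((G.neighborFinset z).filter (fun w => G.dist x w = t + 1)).card = b t := by
    have hc := h.count_b t htD x z hz
    rw [← hc, show {w : V | G.Adj z w ∧ G.dist x w = t + 1} =
      ↑((G.neighborFinset z).filter (fun w => G.dist x w = t + 1)) by
        ext w; simp [Finset.mem_filter], Set.ncard_coe_finset]
  have e4 := Finset.card_filter_add_card_filter_not
    (s := G.neighborFinset z) (p := fun w => G.dist x w ≤ t)
  rw [e2, e3] at e4
  have e5 : (G.neighborFinset z).card = b 0 := h.degree_eq z
  rw [e1]
  omega

private lemma ball_sum [DecidableEq V] [DecidableRel G.Adj] (h : IsDRG G D b c) {t : ℕ} (ht : 1 ≤ t)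
    (htD : t ≤ D) (hbt : 1 ≤ b t) (x : V) (S : Finset V)
    (hS : ∀ w, w ∈ S ↔ G.dist x w ≤ t) :
    ((b 0 : ℝ) - (b t : ℝ)) * (S.card : ℝ) <
      ∑ z ∈ S, ((G.neighborFinset z ∩ S).card : ℝ) := by
  classical
  have hxS : x ∈ S := (hS x).2 (by rw [SimpleGraph.dist_self]; omega)
  have hterm : ∀ z ∈ S.erase x,
      ((b 0 : ℝ) - (b t : ℝ)) ≤ ((G.neighborFinset z ∩ S).card : ℝ) := by
    intro z hz
    have hzt : G.dist x z ≤ t := (hS z).1 (Finset.mem_of_mem_erase hz)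
    rcases eq_or_lt_of_le hzt with heq | hlt
    · have h1 := innerdeg_eq h htD S hS heq
      have h2 : ((G.neighborFinset z ∩ S).card : ℝ) + (b t : ℝ) = (b 0 : ℝ) := by
        exact_mod_cast h1
      linarith
    · rw [innerdeg_lt h S hS hlt]
      have hd : (G.neighborFinset z).card = b 0 := h.degree_eq z
      rw [hd]
      have : (0 : ℝ) ≤ (b t : ℝ) := by positivity
      linarith
  have hxval : ((G.neighborFinset x ∩ S).card : ℝ) = (b 0 : ℝ) := by
    rw [innerdeg_lt h S hS (by rw [SimpleGraph.dist_self]; omega)]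
    have hd : (G.neighborFinset x).card = b 0 := h.degree_eq x
    rw [hd]
  have hsplit : (∑ z ∈ S.erase x, ((G.neighborFinset z ∩ S).card : ℝ)) +
      ((G.neighborFinset x ∩ S).card : ℝ) =
      ∑ z ∈ S, ((G.neighborFinset z ∩ S).card : ℝ) :=
    Finset.sum_erase_add S _ hxS
  have hlow : ((S.erase x).card : ℝ) * ((b 0 : ℝ) - (b t : ℝ)) ≤
      ∑ z ∈ S.erase x, ((G.neighborFinset z ∩ S).card : ℝ) := by
    have := Finset.card_nsmul_le_sum (S.erase x) _ _ hterm
    simpa [nsmul_eq_mul] using this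
  have hcard : ((S.erase x).card : ℝ) = (S.card : ℝ) - 1 := by
    rw [Finset.card_erase_of_mem hxS, Nat.cast_sub (Finset.card_pos.2 ⟨x, hxS⟩), Nat.cast_one]
  have hbt' : (1 : ℝ) ≤ (b t : ℝ) := by exact_mod_cast hbt
  rw [← hsplit, hxval]
  rw [hcard] at hlow
  nlinarith [hlow, hbt']

end Aux

/-- If `Γ` is distance-regular with diameter `D ≥ 2t + 2`, then the second largest
eigenvalue `θ₁` of `Γ` satisfies `θ₁ > a_t + c_t`: there is an adjacency eigenvalue
`θ < k` with `θ > a_t + c_t`, where `a_t = k - b_t - c_t`. -/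
theorem second_largest_eigenvalue_gt_a_t_add_c_t {V : Type} [Fintype V]
    (G : SimpleGraph V) [DecidableRel G.Adj] (D : ℕ) (b c : ℕ → ℕ) (h : IsDRG G D b c)
    (t : ℕ) (ht : 1 ≤ t) (hD : 2 * t + 2 ≤ D) :
    ∃ θ : ℝ, IsAdjEigenvalue G θ ∧ θ < (b 0 : ℝ) ∧
      ((b 0 : ℝ) - (b t : ℝ) - (c t : ℝ)) + (c t : ℝ) < θ := by
  classical
  open Finset Matrix in
  obtain ⟨x, y, hxy⟩ := h.exists_dist_eq
  have hconn := h.connected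
  have htD : t ≤ D := by omega
  have hbt : 1 ≤ b t := h.b_pos (by omega)
  suffices hgoal : ∃ θ : ℝ, IsAdjEigenvalue G θ ∧ θ < (b 0 : ℝ) ∧ (b 0 : ℝ) - (b t : ℝ) < θ by
    obtain ⟨θ, h1, h2, h3⟩ := hgoal
    exact ⟨θ, h1, h2, by linarith⟩
  set m : ℝ := (b 0 : ℝ) - (b t : ℝ) with hm
  -- the two balls
  set S1 : Finset V := Finset.univ.filter (fun w => G.dist x w ≤ t) with hS1def
  set S2 : Finset V := Finset.univ.filter (fun w => G.dist y w ≤ t) with hS2def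
  have hS1 : ∀ w, w ∈ S1 ↔ G.dist x w ≤ t := by intro w; simp [hS1def]
  have hS2 : ∀ w, w ∈ S2 ↔ G.dist y w ≤ t := by intro w; simp [hS2def]
  have hxS1 : x ∈ S1 := (hS1 x).2 (by rw [SimpleGraph.dist_self]; omega)
  have hyS2 : y ∈ S2 := (hS2 y).2 (by rw [SimpleGraph.dist_self]; omega)
  have hsep : ∀ z ∈ S1, ∀ w ∈ S2, ¬ G.Adj z w ∧ z ≠ w := by
    intro z hz w hw
    have hz' : G.dist x z ≤ t := (hS1 z).1 hz
    have hw' : G.dist y w ≤ t := (hS2 w).1 hw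
    have h1 : G.dist x y ≤ G.dist x z + G.dist z y := hconn.dist_triangle
    have h2 : G.dist z y ≤ G.dist z w + G.dist w y := hconn.dist_triangle
    have h3 : G.dist w y = G.dist y w := SimpleGraph.dist_comm
    constructor
    · intro hadj
      have h4 : G.dist z w = 1 := SimpleGraph.dist_eq_one_iff_adj.2 hadj
      omega
    · rintro rfl
      have h4 : G.dist z z = 0 := SimpleGraph.dist_self
      omega
  -- the test vector
  set α : ℝ := (S2.card : ℝ) with hα
  set β : ℝ := -(S1.card : ℝ) with hβ
  have hα0 : 0 < α := by
    rw [hα]; exact_mod_cast Finset.card_pos.2 ⟨y, hyS2⟩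
  have hβ0 : β < 0 := by
    rw [hβ]; simp only [neg_neg, neg_lt_zero]
    exact_mod_cast Finset.card_pos.2 ⟨x, hxS1⟩
  set u : V → ℝ := fun z => (if z ∈ S1 then α else 0) + (if z ∈ S2 then β else 0) with hu
  have hind : ∀ (T : Finset V) (f : V → ℝ),
      ∑ z : V, (if z ∈ T then f z else 0) = ∑ z ∈ T, f z := by
    intro T f
    rw [Finset.sum_ite_mem]
    congr 1
    exact Finset.univ_inter T
  have hsum : ∑ z : V, u z = 0 := by
    simp only [hu, Finset.sum_add_distrib, hind, Finset.sum_const, nsmul_eq_mul]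
    rw [hα, hβ]; ring
  have hAu : ∀ z, ((G.adjMatrix ℝ) *ᵥ u) z =
      α * ((G.neighborFinset z ∩ S1).card : ℝ) + β * ((G.neighborFinset z ∩ S2).card : ℝ) := by
    intro z
    rw [SimpleGraph.adjMatrix_mulVec_apply]
    simp only [hu, Finset.sum_add_distrib, Finset.sum_ite_mem, Finset.sum_const, nsmul_eq_mul]
    ring
  have hzero12 : ∀ z ∈ S1, G.neighborFinset z ∩ S2 = ∅ := by
    intro z hz
    ext w
    simp only [Finset.mem_inter, SimpleGraph.mem_neighborFinset, Finset.notMem_empty, iff_false,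
      not_and]
    intro hadj hw
    exact (hsep z hz w hw).1 hadj
  have hzero21 : ∀ z ∈ S2, G.neighborFinset z ∩ S1 = ∅ := by
    intro z hz
    ext w
    simp only [Finset.mem_inter, SimpleGraph.mem_neighborFinset, Finset.notMem_empty, iff_false,
      not_and]
    intro hadj hw
    exact (hsep w hw z hz).1 hadj.symm
  set E1 : ℝ := ∑ z ∈ S1, ((G.neighborFinset z ∩ S1).card : ℝ) with hE1def
  set E2 : ℝ := ∑ z ∈ S2, ((G.neighborFinset z ∩ S2).card : ℝ) with hE2def
  have hQ : u ⬝ᵥ ((G.adjMatrix ℝ) *ᵥ u) = α ^ 2 * E1 + β ^ 2 * E2 := by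
    have key : ∀ z : V, u z * ((G.adjMatrix ℝ) *ᵥ u) z =
        (if z ∈ S1 then α ^ 2 * ((G.neighborFinset z ∩ S1).card : ℝ) else 0) +
        (if z ∈ S2 then β ^ 2 * ((G.neighborFinset z ∩ S2).card : ℝ) else 0) := by
      intro z
      rw [hAu z]
      by_cases h1 : z ∈ S1
      · have h2 : z ∉ S2 := fun h2 => (hsep z h1 z h2).2 rfl
        have h3 : G.neighborFinset z ∩ S2 = ∅ := hzero12 z h1
        simp only [hu, if_pos h1, if_neg h2, h3, Finset.card_empty, Nat.cast_zero]
        ring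
      · by_cases h2 : z ∈ S2
        · have h3 : G.neighborFinset z ∩ S1 = ∅ := hzero21 z h2
          simp only [hu, if_neg h1, if_pos h2, h3, Finset.card_empty, Nat.cast_zero]
          ring
        · simp only [hu, if_neg h1, if_neg h2]
          ring
    rw [dotProduct, hE1def, hE2def]
    simp only [key, Finset.sum_add_distrib, hind, Finset.mul_sum]
  have hnorm : u ⬝ᵥ u = α ^ 2 * (S1.card : ℝ) + β ^ 2 * (S2.card : ℝ) := by
    have key : ∀ z : V, u z * u z =
        (if z ∈ S1 then α ^ 2 else 0) + (if z ∈ S2 then β ^ 2 else 0) := by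
      intro z
      by_cases h1 : z ∈ S1
      · have h2 : z ∉ S2 := fun h2 => (hsep z h1 z h2).2 rfl
        simp only [hu, if_pos h1, if_neg h2]
        ring
      · by_cases h2 : z ∈ S2
        · simp only [hu, if_neg h1, if_pos h2]
          ring
        · simp only [hu, if_neg h1, if_neg h2]
          ring
    rw [dotProduct]
    simp only [key, Finset.sum_add_distrib, hind, Finset.sum_const, nsmul_eq_mul]
    ring
  have hE1 := ball_sum h ht htD hbt x S1 hS1
  have hE2 := ball_sum h ht htD hbt y S2 hS2
  rw [← hm, ← hE1def] at hE1
  rw [← hm, ← hE2def] at hE2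
  have hα2 : 0 < α ^ 2 := by positivity
  have hβ2 : 0 < β ^ 2 := by nlinarith
  have hQgt : m * (u ⬝ᵥ u) < u ⬝ᵥ ((G.adjMatrix ℝ) *ᵥ u) := by
    rw [hQ, hnorm]
    have t1 : α ^ 2 * (m * (S1.card : ℝ)) < α ^ 2 * E1 := by
      exact mul_lt_mul_of_pos_left hE1 hα2
    have t2 : β ^ 2 * (m * (S2.card : ℝ)) < β ^ 2 * E2 := by
      exact mul_lt_mul_of_pos_left hE2 hβ2
    nlinarith [t1, t2]
  -- spectral part
  have hA : (G.adjMatrix ℝ).IsHermitian := by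
    rw [Matrix.IsHermitian, Matrix.conjTranspose_eq_transpose_of_trivial]
    exact (SimpleGraph.isSymm_adjMatrix G).eq
  set W := hA.eigenvectorBasis with hW
  set μ := hA.eigenvalues with hμ
  have hWeig : ∀ i : V, (G.adjMatrix ℝ) *ᵥ (W i : V → ℝ) = μ i • (W i : V → ℝ) := by
    intro i
    exact hA.mulVec_eigenvectorBasis i
  have hdot : ∀ a b' : EuclideanSpace ℝ V, (inner ℝ a b' : ℝ) = (a : V → ℝ) ⬝ᵥ (b' : V → ℝ) :=
    fun _ _ => by simp [PiLp.inner_apply, dotProduct, mul_comm]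
  have hsym : ∀ (a c' : V → ℝ),
      a ⬝ᵥ ((G.adjMatrix ℝ) *ᵥ c') = ((G.adjMatrix ℝ) *ᵥ a) ⬝ᵥ c' := by
    intro a c'
    rw [Matrix.dotProduct_mulVec, ← Matrix.mulVec_transpose, (SimpleGraph.isSymm_adjMatrix G).eq]
  set cf : V → ℝ := fun i => (W i : V → ℝ) ⬝ᵥ u with hcf
  have hdecomp : u ⬝ᵥ ((G.adjMatrix ℝ) *ᵥ u) = ∑ i : V, μ i * (cf i) ^ 2 := by
    have h0 := W.sum_inner_mul_inner (WithLp.toLp 2 u) (WithLp.toLp 2 ((G.adjMatrix ℝ) *ᵥ u))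
    simp only [hdot, WithLp.ofLp_toLp] at h0
    rw [← h0]
    refine Finset.sum_congr rfl (fun i _ => ?_)
    rw [hsym, hWeig i, smul_dotProduct, dotProduct_comm u]
    rw [hcf]
    simp only [smul_eq_mul]
    ring
  have hnorm2 : u ⬝ᵥ u = ∑ i : V, (cf i) ^ 2 := by
    have h0 := W.sum_inner_mul_inner (WithLp.toLp 2 u) (WithLp.toLp 2 u)
    simp only [hdot, WithLp.ofLp_toLp] at h0
    rw [← h0]
    refine Finset.sum_congr rfl (fun i _ => ?_)
    rw [dotProduct_comm u, hcf]
    ring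
  have hWnorm : ∀ i : V, (W i : V → ℝ) ⬝ᵥ (W i : V → ℝ) = 1 := by
    intro i
    have := W.orthonormal.1 i
    have h2 : (inner ℝ (W i) (W i) : ℝ) = 1 := by
      rw [real_inner_self_eq_norm_sq, this]; norm_num
    rw [← hdot]
    exact h2
  have hμle : ∀ i : V, μ i ≤ (b 0 : ℝ) := by
    intro i
    have hpsd := (SimpleGraph.posSemidef_lapMatrix ℝ G).dotProduct_mulVec_nonneg (W i : V → ℝ)
    simp only [star_trivial, RCLike.re_to_real] at hpsd
    have hexp : (W i : V → ℝ) ⬝ᵥ (G.lapMatrix ℝ *ᵥ (W i : V → ℝ)) =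
        (b 0 : ℝ) - μ i := by
      rw [SimpleGraph.lapMatrix, Matrix.sub_mulVec, dotProduct_sub,
        SimpleGraph.dotProduct_mulVec_degMatrix, hWeig i, dotProduct_smul]
      have hdeg : ∀ j : V, (G.degree j : ℝ) = (b 0 : ℝ) := by
        intro j; exact_mod_cast congrArg Nat.cast (h.degree_eq j)
      have e : ∑ j : V, (G.degree j : ℝ) * (W i : V → ℝ) j * (W i : V → ℝ) j =
          (b 0 : ℝ) * ((W i : V → ℝ) ⬝ᵥ (W i : V → ℝ)) := by
        rw [dotProduct, Finset.mul_sum]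
        refine Finset.sum_congr rfl (fun j _ => ?_)
        rw [hdeg j]; ring
      rw [e, hWnorm i]
      simp only [smul_eq_mul, hWnorm i]
      ring
    rw [hexp] at hpsd
    linarith
  have hconst : ∀ i : V, μ i = (b 0 : ℝ) → ∀ z z' : V, (W i : V → ℝ) z = (W i : V → ℝ) z' := by
    intro i hi z z'
    have hLker : G.lapMatrix ℝ *ᵥ (W i : V → ℝ) = 0 := by
      rw [SimpleGraph.lapMatrix, Matrix.sub_mulVec, hWeig i, hi]
      funext z0
      simp only [Pi.sub_apply, Pi.smul_apply, smul_eq_mul, Pi.zero_apply,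
        SimpleGraph.degMatrix_mulVec_apply]
      have hdeg : (G.degree z0 : ℝ) = (b 0 : ℝ) := by
        exact_mod_cast congrArg Nat.cast (h.degree_eq z0)
      rw [hdeg]
      exact sub_self _
    have hkey := (G.lapMatrix_mulVec_eq_zero_iff_forall_reachable (x := (W i : V → ℝ))).1
      hLker
    exact hkey z z' (hconn.preconnected z z')
  -- conclusion by contradiction
  by_contra hcon
  push_neg at hcon
  have hbound : ∀ i : V, μ i * (cf i) ^ 2 ≤ m * (cf i) ^ 2 := by
    intro i
    by_cases hik : μ i = (b 0 : ℝ)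
    · have hc0 : cf i = 0 := by
        have hcst := hconst i hik
        have e : cf i = (W i : V → ℝ) x * ∑ z : V, u z := by
          rw [hcf]
          simp only [dotProduct, Finset.mul_sum]
          refine Finset.sum_congr rfl (fun z _ => ?_)
          rw [hcst z x]
        rw [e, hsum, mul_zero]
      rw [hc0]
      simp
    · have hlt : μ i < (b 0 : ℝ) := lt_of_le_of_ne (hμle i) hik
      have heig : IsAdjEigenvalue G (μ i) :=
        ⟨(W i : V → ℝ), (WithLp.ofLp_eq_zero (p := 2)).not.2 (W.orthonormal.ne_zero i), hWeig i⟩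
      have hle := hcon (μ i) heig hlt
      exact mul_le_mul_of_nonneg_right hle (sq_nonneg _)
  have hsumle : ∑ i : V, μ i * (cf i) ^ 2 ≤ m * ∑ i : V, (cf i) ^ 2 := by
    rw [Finset.mul_sum]
    exact Finset.sum_le_sum (fun i _ => hbound i)
  rw [← hdecomp, ← hnorm2] at hsumle
  linarith
end

section
/- Let Γ be a distance-regular graph with valency k, diameter D ≥ 2 and intersection number c₂ = 1. Then Γ is of order (s, t) with s = a₁ + 1 for some integer t ≥ 1, and b₁ = t(a₁ + 1) = (t/(t+1))·k; that is, for every vertex x the subgraph induced on the neighborhood of x is a disjoint union of t + 1 cliques of size a₁ + 1. Moreover, if t = 1 then Γ is a line graph (isomorphic to the line graph of some graph). -/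
open SimpleGraph

/-- `G` is a graph of order `(s, t)`: the neighbourhood of each vertex is the disjoint
union of `t + 1` cliques of size `s`, with no edges between different cliques. -/
def IsGraphOfOrder {V : Type*} [Fintype V] [DecidableEq V] (G : SimpleGraph V)
    (s t : ℕ) : Prop :=
  ∀ x : V, ∃ P : Finset (Finset V),
    P.card = t + 1 ∧
    (∀ C ∈ P, C.card = s ∧ G.IsClique (C : Set V)) ∧
    (∀ C₁ ∈ P, ∀ C₂ ∈ P, C₁ ≠ C₂ → Disjoint C₁ C₂ ∧
      ∀ u ∈ C₁, ∀ v ∈ C₂, ¬ G.Adj u v) ∧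
    (∀ y : V, G.Adj x y ↔ ∃ C ∈ P, y ∈ C)

section DRGAux

open SimpleGraph Finset

open scoped Classical

variable {V : Type} [Fintype V] [DecidableEq V] {G : SimpleGraph V} {D : ℕ} {b c : ℕ → ℕ}

private lemma exists_adj_dist_sub (hconn : G.Connected) {x y : V} {n : ℕ}
    (hd : G.dist x y = n + 1) : ∃ z : V, G.Adj y z ∧ G.dist x z = n := by
  obtain ⟨q, hq⟩ := (hconn y x).exists_walk_length_eq_dist
  have hd' : G.dist y x = n + 1 := by rw [SimpleGraph.dist_comm]; exact hd
  have hnil : ¬ q.Nil := by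
    rw [SimpleGraph.Walk.not_nil_iff_lt_length]; omega
  refine ⟨q.getVert 1, q.adj_snd hnil, ?_⟩
  have h1 : (q.tail).length + 1 = q.length := q.length_tail_add_one hnil
  have hle : G.dist (q.getVert 1) x ≤ q.tail.length := SimpleGraph.dist_le q.tail
  have htri := hconn.dist_triangle (u := y) (v := q.getVert 1) (w := x)
  have h2 : G.dist y (q.getVert 1) = 1 :=
    SimpleGraph.dist_eq_one_iff_adj.mpr (q.adj_snd hnil)
  have h3 : G.dist x (q.getVert 1) = G.dist (q.getVert 1) x := SimpleGraph.dist_comm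
  omega

private lemma exists_dist_eq_of_le_s13 (hconn : G.Connected) {x : V} :
    ∀ (m : ℕ) (y : V), G.dist x y = m → ∀ n ≤ m, ∃ z : V, G.dist x z = n := by
  intro m
  induction m with
  | zero => intro y hy n hn; exact ⟨y, by omega⟩
  | succ m ih =>
    intro y hy n hn
    rcases Nat.eq_or_lt_of_le hn with rfl | hlt
    · exact ⟨y, hy⟩
    · obtain ⟨z, _, hz⟩ := exists_adj_dist_sub hconn hy
      exact ih z hz n (by omega)

private lemma deg_eq (h : IsDRG G D b c) (x : V) : (G.neighborFinset x).card = b 0 := by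
  have h0 := h.count_b 0 (Nat.zero_le D) x x (SimpleGraph.dist_self)
  rw [show {z : V | G.Adj x z ∧ G.dist x z = 0 + 1} = ↑(G.neighborFinset x) by
    ext z
    simp [SimpleGraph.mem_neighborFinset, SimpleGraph.dist_eq_one_iff_adj]] at h0
  rwa [Set.ncard_coe_finset] at h0

private lemma common_card (h : IsDRG G D b c) (hD : 2 ≤ D) (hc2 : c 2 = 1)
    {x w : V} (hxw : G.dist x w = 2) :
    (G.neighborFinset x ∩ G.neighborFinset w).card = 1 := by
  have h0 := h.count_c 2 hD x w hxw
  rw [show {z : V | G.Adj w z ∧ G.dist x z = 2 - 1} =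
      ↑(G.neighborFinset x ∩ G.neighborFinset w) by
    ext z
    simp only [Set.mem_setOf_eq, Finset.coe_inter, Set.mem_inter_iff, Finset.mem_coe,
      SimpleGraph.mem_neighborFinset]
    rw [show (2:ℕ) - 1 = 1 from rfl, SimpleGraph.dist_eq_one_iff_adj]
    tauto] at h0
  rw [Set.ncard_coe_finset] at h0
  rw [h0, hc2]

/-- key triangle lemma from c₂ = 1 -/
private lemma adj_of_c2 (h : IsDRG G D b c) (hD : 2 ≤ D) (hc2 : c 2 = 1)
    {x y z w : V} (hxy : G.Adj x y) (hxz : G.Adj x z) (hxw : G.Adj x w)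
    (hyz : G.Adj y z) (hyw : G.Adj y w) (hzw : z ≠ w) : G.Adj z w := by
  by_contra hadj
  have h1 : G.dist z x = 1 := SimpleGraph.dist_eq_one_iff_adj.mpr hxz.symm
  have h2 : G.dist x w = 1 := SimpleGraph.dist_eq_one_iff_adj.mpr hxw
  have htri := h.connected.dist_triangle (u := z) (v := x) (w := w)
  have hne0 : G.dist z w ≠ 0 := fun h0 => hzw (h.connected.dist_eq_zero_iff.mp h0)
  have hne1 : G.dist z w ≠ 1 := fun h1 => hadj (SimpleGraph.dist_eq_one_iff_adj.mp h1)
  have hd : G.dist z w = 2 := by omega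
  have hcard := common_card h hD hc2 hd
  have hx : x ∈ G.neighborFinset z ∩ G.neighborFinset w := by
    rw [Finset.mem_inter, SimpleGraph.mem_neighborFinset, SimpleGraph.mem_neighborFinset]
    exact ⟨hxz.symm, hxw.symm⟩
  have hy : y ∈ G.neighborFinset z ∩ G.neighborFinset w := by
    rw [Finset.mem_inter, SimpleGraph.mem_neighborFinset, SimpleGraph.mem_neighborFinset]
    exact ⟨hyz.symm, hyw.symm⟩
  have : 1 < (G.neighborFinset z ∩ G.neighborFinset w).card :=
    Finset.one_lt_card.mpr ⟨x, hx, y, hy, hxy.ne⟩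
  omega

private lemma a1_count (h : IsDRG G D b c) (hD : 2 ≤ D) {x y : V} (hxy : G.Adj x y) :
    (G.neighborFinset x ∩ G.neighborFinset y).card + b 1 + 1 = b 0 := by
  have hd1 : G.dist x y = 1 := SimpleGraph.dist_eq_one_iff_adj.mpr hxy
  have hb1 := h.count_b 1 (by omega) x y hd1
  set A2 : Finset V := (G.neighborFinset y).filter (fun z => G.dist x z = 2) with hA2def
  have hA2card : A2.card = b 1 := by
    rw [← Set.ncard_coe_finset,
      show (↑A2 : Set V) = {z : V | G.Adj y z ∧ G.dist x z = 1 + 1} by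
        ext z
        simp [hA2def, SimpleGraph.mem_neighborFinset]]
    exact hb1
  have hunion : G.neighborFinset y =
      insert x ((G.neighborFinset x ∩ G.neighborFinset y) ∪ A2) := by
    ext z
    simp only [Finset.mem_insert, Finset.mem_union, Finset.mem_inter, Finset.mem_filter,
      SimpleGraph.mem_neighborFinset, hA2def]
    constructor
    · intro hz
      have hdyz : G.dist y z = 1 := SimpleGraph.dist_eq_one_iff_adj.mpr hz
      have htri := h.connected.dist_triangle (u := x) (v := y) (w := z)
      have h0 : G.dist x z = 0 ∨ G.dist x z = 1 ∨ G.dist x z = 2 := by omega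
      rcases h0 with h0 | h0 | h0
      · left; exact (h.connected.dist_eq_zero_iff.mp h0).symm
      · right; left; exact ⟨SimpleGraph.dist_eq_one_iff_adj.mp h0, hz⟩
      · right; right; exact ⟨hz, h0⟩
    · rintro (rfl | ⟨hxz, hyz⟩ | ⟨hyz, _⟩)
      · exact hxy.symm
      · exact hyz
      · exact hyz
  have hxnot : x ∉ (G.neighborFinset x ∩ G.neighborFinset y) ∪ A2 := by
    simp only [Finset.mem_union, Finset.mem_inter, Finset.mem_filter,
      SimpleGraph.mem_neighborFinset, hA2def]
    rintro (⟨hxx, _⟩ | ⟨_, hdxx⟩)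
    · exact G.loopless.irrefl x hxx
    · rw [SimpleGraph.dist_self] at hdxx; omega
  have hdisj : Disjoint (G.neighborFinset x ∩ G.neighborFinset y) A2 := by
    rw [Finset.disjoint_left]
    intro z hz hz2
    have h1 : G.dist x z = 1 := SimpleGraph.dist_eq_one_iff_adj.mpr
      ((SimpleGraph.mem_neighborFinset _ _ _).mp (Finset.mem_inter.mp hz).1)
    have h2 := (Finset.mem_filter.mp hz2).2
    omega
  have hdeg := deg_eq h y
  rw [hunion, Finset.card_insert_of_notMem hxnot, Finset.card_union_of_disjoint hdisj] at hdeg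
  omega

private lemma b1_pos (h : IsDRG G D b c) (hD : 2 ≤ D) : 1 ≤ b 1 := by
  obtain ⟨x0, y0, hxy⟩ := h.exists_dist_eq
  obtain ⟨w, hw⟩ := exists_dist_eq_of_le_s13 h.connected D y0 hxy 2 hD
  obtain ⟨z, hz, hz2⟩ := exists_adj_dist_sub h.connected (show G.dist x0 w = 1 + 1 from hw)
  have hb := h.count_b 1 (by omega) x0 z hz2
  have hmem : w ∈ {u : V | G.Adj z u ∧ G.dist x0 u = 1 + 1} := ⟨hz.symm, hw⟩
  have hpos : 0 < {u : V | G.Adj z u ∧ G.dist x0 u = 1 + 1}.ncard :=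
    (Set.ncard_pos (Set.toFinite _)).mpr ⟨w, hmem⟩
  omega

private lemma exists_neighbor (h : IsDRG G D b c) (hD : 2 ≤ D) (x : V) :
    ∃ y, G.Adj x y := by
  obtain ⟨u, w, huw⟩ := h.exists_dist_eq
  have hne : u ≠ w := by
    intro e; rw [e, SimpleGraph.dist_self] at huw; omega
  have hv : ∃ v : V, v ≠ x := by
    by_cases hux : u = x
    · exact ⟨w, by rw [← hux]; exact hne.symm⟩
    · exact ⟨u, hux⟩
  obtain ⟨v, hvx⟩ := hv
  have h0 : G.dist x v ≠ 0 := fun e => hvx ((h.connected.dist_eq_zero_iff).mp e).symm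
  obtain ⟨z, hz⟩ := exists_dist_eq_of_le_s13 h.connected (G.dist x v) v rfl 1 (by omega)
  exact ⟨z, SimpleGraph.dist_eq_one_iff_adj.mp hz⟩

end DRGAux

section Cliques

open SimpleGraph Finset

open scoped Classical in
/-- the local clique of `y` in the neighbourhood of `x` -/
noncomputable def cls {V : Type} [Fintype V] [DecidableEq V] (G : SimpleGraph V)
    (x y : V) : Finset V :=
  insert y (G.neighborFinset x ∩ G.neighborFinset y)

open scoped Classical in
/-- the partition of the neighbourhood of `x` into local cliques -/
noncomputable def Pp {V : Type} [Fintype V] [DecidableEq V] (G : SimpleGraph V)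
    (x : V) : Finset (Finset V) :=
  (G.neighborFinset x).image (cls G x)

open scoped Classical in
/-- the maximal clique on the edge `xy` -/
noncomputable def Kc {V : Type} [Fintype V] [DecidableEq V] (G : SimpleGraph V)
    (x y : V) : Finset V :=
  insert x (cls G x y)

open scoped Classical in
/-- the set of maximal cliques through `x` -/
noncomputable def Qq {V : Type} [Fintype V] [DecidableEq V] (G : SimpleGraph V)
    (x : V) : Finset (Finset V) :=
  (G.neighborFinset x).image (Kc G x)

open scoped Classical

variable {V : Type} [Fintype V] [DecidableEq V] {G : SimpleGraph V} {D : ℕ} {b c : ℕ → ℕ}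

lemma mem_cls {x y z : V} : z ∈ cls G x y ↔ z = y ∨ (G.Adj x z ∧ G.Adj y z) := by
  simp [cls, SimpleGraph.mem_neighborFinset]

lemma mem_Pp {x : V} {C : Finset V} : C ∈ Pp G x ↔ ∃ y, G.Adj x y ∧ C = cls G x y := by
  simp [Pp, SimpleGraph.mem_neighborFinset, eq_comm]

lemma mem_Kc {x y z : V} : z ∈ Kc G x y ↔ z = x ∨ z = y ∨ (G.Adj x z ∧ G.Adj y z) := by
  simp [Kc, mem_cls]

lemma mem_Qq {x : V} {C : Finset V} : C ∈ Qq G x ↔ ∃ y, G.Adj x y ∧ C = Kc G x y := by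
  simp [Qq, SimpleGraph.mem_neighborFinset, eq_comm]

lemma Kc_comm (x y : V) : Kc G x y = Kc G y x := by
  ext z; rw [mem_Kc, mem_Kc]
  constructor
  · rintro (rfl | rfl | ⟨h1, h2⟩)
    · exact Or.inr (Or.inl rfl)
    · exact Or.inl rfl
    · exact Or.inr (Or.inr ⟨h2, h1⟩)
  · rintro (rfl | rfl | ⟨h1, h2⟩)
    · exact Or.inr (Or.inl rfl)
    · exact Or.inl rfl
    · exact Or.inr (Or.inr ⟨h2, h1⟩)

lemma mem_Kc_left {x y : V} : x ∈ Kc G x y := mem_Kc.mpr (Or.inl rfl)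

lemma mem_Kc_right {x y : V} : y ∈ Kc G x y := mem_Kc.mpr (Or.inr (Or.inl rfl))

lemma cls_subset {x y : V} (hxy : G.Adj x y) : cls G x y ⊆ G.neighborFinset x := by
  intro z hz
  rw [mem_cls] at hz
  rw [SimpleGraph.mem_neighborFinset]
  rcases hz with rfl | ⟨h1, _⟩
  · exact hxy
  · exact h1

lemma cls_card (h : IsDRG G D b c) (hD : 2 ≤ D) {x y : V} (hxy : G.Adj x y) :
    (cls G x y).card + b 1 = b 0 := by
  have hy : y ∉ G.neighborFinset x ∩ G.neighborFinset y := by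
    intro hmem
    exact G.loopless.irrefl y ((SimpleGraph.mem_neighborFinset _ _ _).mp (Finset.mem_inter.mp hmem).2)
  have hcls : cls G x y = insert y (G.neighborFinset x ∩ G.neighborFinset y) := rfl
  have := a1_count h hD hxy
  rw [hcls, Finset.card_insert_of_notMem hy]
  omega

lemma cls_card_pos {x y : V} : 1 ≤ (cls G x y).card :=
  Finset.card_pos.mpr ⟨y, mem_cls.mpr (Or.inl rfl)⟩

lemma cls_clique (h : IsDRG G D b c) (hD : 2 ≤ D) (hc2 : c 2 = 1) {x y : V}
    (hxy : G.Adj x y) : G.IsClique (cls G x y : Set V) := by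
  intro u hu w hw hne
  rw [Finset.mem_coe, mem_cls] at hu hw
  rcases hu with rfl | ⟨hxu, hyu⟩
  · rcases hw with rfl | ⟨hxw, hyw⟩
    · exact absurd rfl hne
    · exact hyw
  · rcases hw with rfl | ⟨hxw, hyw⟩
    · exact hyu.symm
    · exact adj_of_c2 h hD hc2 hxy hxu hxw hyu hyw hne

lemma cls_eq (h : IsDRG G D b c) (hD : 2 ≤ D) (hc2 : c 2 = 1) {x y z : V}
    (hxy : G.Adj x y) (hz : z ∈ cls G x y) : cls G x z = cls G x y := by
  rw [mem_cls] at hz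
  rcases hz with rfl | ⟨hxz, hyz⟩
  · rfl
  · ext w
    rw [mem_cls, mem_cls]
    constructor
    · rintro (rfl | ⟨hxw, hzw⟩)
      · exact Or.inr ⟨hxz, hyz⟩
      · by_cases hwy : w = y
        · exact Or.inl hwy
        · exact Or.inr ⟨hxw,
            adj_of_c2 h hD hc2 hxz hxy hxw hyz.symm hzw (fun e => hwy e.symm)⟩
    · rintro (rfl | ⟨hxw, hyw⟩)
      · exact Or.inr ⟨hxy, hyz.symm⟩
      · by_cases hwz : w = z
        · exact Or.inl hwz
        · exact Or.inr ⟨hxw,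
            adj_of_c2 h hD hc2 hxy hxz hxw hyz hyw (fun e => hwz e.symm)⟩

lemma Pp_disj (h : IsDRG G D b c) (hD : 2 ≤ D) (hc2 : c 2 = 1) {x : V}
    {C₁ C₂ : Finset V} (h1 : C₁ ∈ Pp G x) (h2 : C₂ ∈ Pp G x) (hne : C₁ ≠ C₂) :
    Disjoint C₁ C₂ := by
  rw [mem_Pp] at h1 h2
  obtain ⟨y1, hy1, rfl⟩ := h1
  obtain ⟨y2, hy2, rfl⟩ := h2
  rw [Finset.disjoint_left]
  intro w hw1 hw2
  exact hne ((cls_eq h hD hc2 hy1 hw1).symm.trans (cls_eq h hD hc2 hy2 hw2))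

lemma Pp_biUnion {x : V} : (Pp G x).biUnion id = G.neighborFinset x := by
  ext z
  simp only [Finset.mem_biUnion, id]
  constructor
  · rintro ⟨C, hC, hz⟩
    rw [mem_Pp] at hC
    obtain ⟨y, hy, rfl⟩ := hC
    exact cls_subset hy hz
  · intro hz
    rw [SimpleGraph.mem_neighborFinset] at hz
    exact ⟨cls G x z, mem_Pp.mpr ⟨z, hz, rfl⟩, mem_cls.mpr (Or.inl rfl)⟩

lemma Pp_card_mul (h : IsDRG G D b c) (hD : 2 ≤ D) (hc2 : c 2 = 1) (x : V) :
    (Pp G x).card * (b 0 - b 1 - c 1 + 1) = b 0 := by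
  have hdisjoint : ∀ C₁ ∈ Pp G x, ∀ C₂ ∈ Pp G x, C₁ ≠ C₂ → Disjoint (id C₁) (id C₂) :=
    fun C₁ h1 C₂ h2 hne => Pp_disj h hD hc2 h1 h2 hne
  have hcard := Finset.card_biUnion hdisjoint
  simp only [id_eq] at hcard
  rw [Pp_biUnion, deg_eq h x] at hcard
  have hs : ∀ C ∈ Pp G x, C.card = b 0 - b 1 - c 1 + 1 := by
    intro C hC
    rw [mem_Pp] at hC
    obtain ⟨y, hy, rfl⟩ := hC
    have h1 := cls_card h hD hy
    have h2 : 1 ≤ (cls G x y).card := cls_card_pos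
    have hc1 := h.c_one
    omega
  rw [Finset.sum_congr rfl hs, Finset.sum_const, smul_eq_mul] at hcard
  exact hcard.symm

lemma Pp_two_le (h : IsDRG G D b c) (hD : 2 ≤ D) (hc2 : c 2 = 1) (x : V) :
    2 ≤ (Pp G x).card := by
  have hmul := Pp_card_mul h hD hc2 x
  have hb1 := b1_pos h hD
  obtain ⟨y, hxy⟩ := exists_neighbor h hD x
  have ha := a1_count h hD hxy
  have hc1 := h.c_one
  by_contra hlt
  push_neg at hlt
  have hle : (Pp G x).card * (b 0 - b 1 - c 1 + 1) ≤ 1 * (b 0 - b 1 - c 1 + 1) :=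
    Nat.mul_le_mul_right _ (by omega)
  rw [one_mul] at hle
  omega

lemma Kc_card (h : IsDRG G D b c) (hD : 2 ≤ D) {x y : V} (hxy : G.Adj x y) :
    (Kc G x y).card = (b 0 - b 1 - c 1 + 1) + 1 := by
  have hx : x ∉ cls G x y := by
    rw [mem_cls]
    rintro (rfl | ⟨hxx, _⟩)
    · exact G.loopless.irrefl x hxy
    · exact G.loopless.irrefl x hxx
  have hKc : Kc G x y = insert x (cls G x y) := rfl
  have h1 := cls_card h hD hxy
  have h2 : 1 ≤ (cls G x y).card := cls_card_pos
  have hc1 := h.c_one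
  rw [hKc, Finset.card_insert_of_notMem hx]
  omega

lemma Kc_clique (h : IsDRG G D b c) (hD : 2 ≤ D) (hc2 : c 2 = 1) {x y : V}
    (hxy : G.Adj x y) : G.IsClique (Kc G x y : Set V) := by
  intro u hu w hw hne
  rw [Finset.mem_coe, mem_Kc] at hu hw
  rcases hu with rfl | rfl | ⟨hxu, hyu⟩
  · rcases hw with rfl | rfl | ⟨hxw, hyw⟩
    · exact absurd rfl hne
    · exact hxy
    · exact hxw
  · rcases hw with rfl | rfl | ⟨hxw, hyw⟩
    · exact hxy.symm
    · exact absurd rfl hne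
    · exact hyw
  · rcases hw with rfl | rfl | ⟨hxw, hyw⟩
    · exact hxu.symm
    · exact hyu.symm
    · exact adj_of_c2 h hD hc2 hxy hxu hxw hyu hyw hne

lemma Kc_max {x y : V} (hxy : G.Adj x y) {T : Finset V} (hT : G.IsClique (T : Set V))
    (hxT : x ∈ T) (hyT : y ∈ T) : T ⊆ Kc G x y := by
  intro z hz
  rw [mem_Kc]
  by_cases hzx : z = x
  · exact Or.inl hzx
  by_cases hzy : z = y
  · exact Or.inr (Or.inl hzy)
  refine Or.inr (Or.inr ⟨?_, ?_⟩)
  · exact hT (Finset.mem_coe.mpr hxT) (Finset.mem_coe.mpr hz) (fun e => hzx e.symm)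
  · exact hT (Finset.mem_coe.mpr hyT) (Finset.mem_coe.mpr hz) (fun e => hzy e.symm)

lemma Kc_eq_of_mem (h : IsDRG G D b c) (hD : 2 ≤ D) (hc2 : c 2 = 1) {u v x : V}
    (huv : G.Adj u v) (hx : x ∈ Kc G u v) :
    ∃ w, G.Adj x w ∧ Kc G u v = Kc G x w := by
  have hx' := hx
  rw [mem_Kc] at hx'
  rcases hx' with h1 | h1 | ⟨hux, hvx⟩
  · subst h1; exact ⟨v, huv, rfl⟩
  · refine ⟨u, ?_, ?_⟩
    · rw [h1]; exact huv.symm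
    · rw [h1]; exact Kc_comm u v
  · refine ⟨u, hux.symm, ?_⟩
    have hsub : Kc G u v ⊆ Kc G x u :=
      Kc_max hux.symm (Kc_clique h hD hc2 huv) hx mem_Kc_left
    have hcard1 := Kc_card h hD huv
    have hcard2 := Kc_card h hD hux.symm
    exact Finset.eq_of_subset_of_card_le hsub (by omega)

lemma Qq_card_eq (x : V) : (Qq G x).card = (Pp G x).card := by
  have himg : Qq G x = (Pp G x).image (insert x) := by
    unfold Qq Pp
    rw [Finset.image_image]
    rfl
  rw [himg]
  apply Finset.card_image_of_injOn
  intro C1 h1 C2 h2 he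
  rw [Finset.mem_coe] at h1 h2
  have hx1 : x ∉ C1 := by
    rw [mem_Pp] at h1
    obtain ⟨y, hy, rfl⟩ := h1
    intro hmem
    exact G.loopless.irrefl x ((SimpleGraph.mem_neighborFinset _ _ _).mp (cls_subset hy hmem))
  have hx2 : x ∉ C2 := by
    rw [mem_Pp] at h2
    obtain ⟨y, hy, rfl⟩ := h2
    intro hmem
    exact G.loopless.irrefl x ((SimpleGraph.mem_neighborFinset _ _ _).mp (cls_subset hy hmem))
  rw [← Finset.erase_insert hx1, ← Finset.erase_insert hx2, he]

/-- the `t = 1` case: every vertex lies on exactly two maximal cliques,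
and the graph is a line graph. -/
lemma t1_linegraph (h : IsDRG G D b c) (hD : 2 ≤ D) (hc2 : c 2 = 1)
    (hQ2card : ∀ x : V, (Qq G x).card = 2) :
    ∃ (W : Type) (H : SimpleGraph W), Nonempty (G ≃g H.lineGraph) := by
  classical
  have hQ2 : ∀ x : V, ∃ C1 C2 : Finset V, C1 ≠ C2 ∧ Qq G x = {C1, C2} := by
    intro x
    exact Finset.card_eq_two.mp (hQ2card x)
  choose f1 f2 hf12 hQeq using hQ2
  have hf1Q : ∀ x, f1 x ∈ Qq G x := by
    intro x; rw [hQeq x]; exact Finset.mem_insert_self _ _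
  have hf2Q : ∀ x, f2 x ∈ Qq G x := by
    intro x; rw [hQeq x]; exact Finset.mem_insert_of_mem (Finset.mem_singleton_self _)
  have hQmem : ∀ (x : V) (C : Finset V), C ∈ Qq G x ↔ C = f1 x ∨ C = f2 x := by
    intro x C
    rw [hQeq x, Finset.mem_insert, Finset.mem_singleton]
  have hxin : ∀ (x : V) (C : Finset V), C ∈ Qq G x → x ∈ C := by
    intro x C hC
    rw [mem_Qq] at hC
    obtain ⟨y, hy, rfl⟩ := hC
    exact mem_Kc_left
  have hWp : ∀ (x : V) (C : Finset V), C ∈ Qq G x → ∃ u v, G.Adj u v ∧ C = Kc G u v := by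
    intro x C hC
    rw [mem_Qq] at hC
    obtain ⟨y, hy, rfl⟩ := hC
    exact ⟨x, y, hy, rfl⟩
  refine ⟨{S : Finset V // ∃ u v : V, G.Adj u v ∧ S = Kc G u v},
    { Adj := fun S T => S ≠ T ∧ ∃ z : V, z ∈ S.1 ∧ z ∈ T.1
      symm := ⟨by rintro S T ⟨hne, z, h1, h2⟩; exact ⟨hne.symm, z, h2, h1⟩⟩
      loopless := ⟨fun S hS => hS.1 rfl⟩ }, ⟨?_⟩⟩
  set Wt := {S : Finset V // ∃ u v : V, G.Adj u v ∧ S = Kc G u v} with hWtdef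
  set Ht : SimpleGraph Wt :=
    { Adj := fun S T => S ≠ T ∧ ∃ z : V, z ∈ S.1 ∧ z ∈ T.1
      symm := ⟨by rintro S T ⟨hne, z, h1, h2⟩; exact ⟨hne.symm, z, h2, h1⟩⟩
      loopless := ⟨fun S hS => hS.1 rfl⟩ } with hHtdef
  -- basic facts about Wt elements
  have hclq : ∀ S : Wt, G.IsClique (S.1 : Set V) := by
    rintro ⟨S, u, v, huv, rfl⟩
    exact Kc_clique h hD hc2 huv
  have hcards : ∀ S : Wt, S.1.card = (b 0 - b 1 - c 1 + 1) + 1 := by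
    rintro ⟨S, u, v, huv, rfl⟩
    exact Kc_card h hD huv
  have hmemiff : ∀ (x : V) (S : Wt), x ∈ S.1 ↔ (S.1 = f1 x ∨ S.1 = f2 x) := by
    rintro x ⟨S, u, v, huv, rfl⟩
    constructor
    · intro hx
      obtain ⟨w, hxw, hKw⟩ := Kc_eq_of_mem h hD hc2 huv hx
      have : Kc G u v ∈ Qq G x := mem_Qq.mpr ⟨w, hxw, hKw⟩
      exact (hQmem x _).mp this
    · intro hS
      rcases hS with hS | hS
      · rw [hS]; exact hxin x _ (hf1Q x)
      · rw [hS]; exact hxin x _ (hf2Q x)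
  -- the two cliques through x, as elements of Wt
  let w1 : V → Wt := fun x => ⟨f1 x, hWp x (f1 x) (hf1Q x)⟩
  let w2 : V → Wt := fun x => ⟨f2 x, hWp x (f2 x) (hf2Q x)⟩
  have hw12 : ∀ x, w1 x ≠ w2 x := by
    intro x e
    exact hf12 x (congrArg Subtype.val e)
  have hedge : ∀ x : V, Ht.Adj (w1 x) (w2 x) := by
    intro x
    exact ⟨hw12 x, x, hxin x _ (hf1Q x), hxin x _ (hf2Q x)⟩
  let φ : V → Ht.edgeSet := fun x => ⟨s(w1 x, w2 x), Ht.mem_edgeSet.mpr (hedge x)⟩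
  have hx1 : ∀ x : V, x ∈ f1 x := fun x => hxin x _ (hf1Q x)
  have hx2 : ∀ x : V, x ∈ f2 x := fun x => hxin x _ (hf2Q x)
  -- injectivity
  have hinj : Function.Injective φ := by
    intro x y hxyeq
    by_contra hne
    have hsym : s(w1 x, w2 x) = s(w1 y, w2 y) := congrArg Subtype.val hxyeq
    rw [Sym2.eq_iff] at hsym
    have hy12 : y ∈ f1 x ∧ y ∈ f2 x := by
      rcases hsym with ⟨e1, e2⟩ | ⟨e1, e2⟩
      · constructor
        · rw [show f1 x = f1 y from congrArg Subtype.val e1]; exact hx1 y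
        · rw [show f2 x = f2 y from congrArg Subtype.val e2]; exact hx2 y
      · constructor
        · rw [show f1 x = f2 y from congrArg Subtype.val e1]; exact hx2 y
        · rw [show f2 x = f1 y from congrArg Subtype.val e2]; exact hx1 y
    have hclq1 : G.IsClique ((f1 x : Finset V) : Set V) := hclq (w1 x)
    have hclq2 : G.IsClique ((f2 x : Finset V) : Set V) := hclq (w2 x)
    have hxy : G.Adj x y :=
      hclq1 (Finset.mem_coe.mpr (hx1 x)) (Finset.mem_coe.mpr hy12.1) hne
    have hsub1 : f1 x ⊆ Kc G x y := Kc_max hxy hclq1 (hx1 x) hy12.1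
    have hsub2 : f2 x ⊆ Kc G x y := Kc_max hxy hclq2 (hx2 x) hy12.2
    have hc1 : (f1 x).card = (b 0 - b 1 - c 1 + 1) + 1 := hcards (w1 x)
    have hc2' : (f2 x).card = (b 0 - b 1 - c 1 + 1) + 1 := hcards (w2 x)
    have hcK : (Kc G x y).card = (b 0 - b 1 - c 1 + 1) + 1 := Kc_card h hD hxy
    have he1 : f1 x = Kc G x y := Finset.eq_of_subset_of_card_le hsub1 (by omega)
    have he2 : f2 x = Kc G x y := Finset.eq_of_subset_of_card_le hsub2 (by omega)
    exact hf12 x (he1.trans he2.symm)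
  -- surjectivity
  have hsurj : Function.Surjective φ := by
    rintro ⟨e, he⟩
    induction e using Sym2.ind with
    | _ S T =>
      obtain ⟨hne, z, hzS, hzT⟩ := Ht.mem_edgeSet.mp he
      have hS := (hmemiff z S).mp hzS
      have hT := (hmemiff z T).mp hzT
      refine ⟨z, Subtype.ext ?_⟩
      show s(w1 z, w2 z) = s(S, T)
      rcases hS with h1 | h1 <;> rcases hT with h2 | h2
      · exact absurd (Subtype.ext (h1.trans h2.symm)) hne
      · rw [show w1 z = S from Subtype.ext h1.symm, show w2 z = T from Subtype.ext h2.symm]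
      · rw [show w1 z = T from Subtype.ext h2.symm, show w2 z = S from Subtype.ext h1.symm]
        exact Sym2.eq_swap
      · exact absurd (Subtype.ext (h1.trans h2.symm)) hne
  refine { toEquiv := Equiv.ofBijective φ ⟨hinj, hsurj⟩, map_rel_iff' := ?_ }
  intro x y
  show Ht.lineGraph.Adj (φ x) (φ y) ↔ G.Adj x y
  rw [SimpleGraph.lineGraph_adj_iff_exists]
  constructor
  · rintro ⟨hne, S, hS1, hS2⟩
    have hS1' : S = w1 x ∨ S = w2 x := Sym2.mem_iff.mp hS1
    have hS2' : S = w1 y ∨ S = w2 y := Sym2.mem_iff.mp hS2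
    have hxS : x ∈ S.1 := by
      rw [hmemiff x S]
      rcases hS1' with rfl | rfl
      · exact Or.inl rfl
      · exact Or.inr rfl
    have hyS : y ∈ S.1 := by
      rw [hmemiff y S]
      rcases hS2' with rfl | rfl
      · exact Or.inl rfl
      · exact Or.inr rfl
    have hxyne : x ≠ y := by
      rintro rfl
      exact hne rfl
    exact hclq S (Finset.mem_coe.mpr hxS) (Finset.mem_coe.mpr hyS) hxyne
  · intro hadj
    have hne : φ x ≠ φ y := fun e => hadj.ne (hinj e)
    set S0 : Wt := ⟨Kc G x y, x, y, hadj, rfl⟩ with hS0def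
    have hS01 : S0.1 = f1 x ∨ S0.1 = f2 x := (hmemiff x S0).mp mem_Kc_left
    have hS02 : S0.1 = f1 y ∨ S0.1 = f2 y := (hmemiff y S0).mp mem_Kc_right
    refine ⟨hne, S0, ?_, ?_⟩
    · rcases hS01 with hS | hS
      · exact Sym2.mem_iff.mpr (Or.inl (Subtype.ext hS))
      · exact Sym2.mem_iff.mpr (Or.inr (Subtype.ext hS))
    · rcases hS02 with hS | hS
      · exact Sym2.mem_iff.mpr (Or.inl (Subtype.ext hS))
      · exact Sym2.mem_iff.mpr (Or.inr (Subtype.ext hS))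

end Cliques

/-- **Lemma 2.2.**  A distance-regular graph with diameter `D ≥ 2` and `c₂ = 1` is of
order `(s, t)` with `s = a₁ + 1` for some integer `t ≥ 1`, and
`b₁ = t(a₁ + 1) = (t/(t+1))·k`; moreover, if `t = 1` then `Γ` is a line graph. -/
theorem drg_c2_eq_one_order_st {V : Type} [Fintype V] [DecidableEq V]
    (G : SimpleGraph V) (D : ℕ) (b c : ℕ → ℕ) (h : IsDRG G D b c) (hD : 2 ≤ D)
    (hc2 : c 2 = 1) :
    ∃ t : ℕ, 1 ≤ t ∧ IsGraphOfOrder G (b 0 - b 1 - c 1 + 1) t ∧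
      b 1 = t * (b 0 - b 1 - c 1 + 1) ∧ (t + 1) * b 1 = t * b 0 ∧
      (t = 1 → ∃ (W : Type) (H : SimpleGraph W), Nonempty (G ≃g H.lineGraph)) := by
  classical
  obtain ⟨x0, y0, hx0⟩ := h.exists_dist_eq
  have hc1 := h.c_one
  have hb1 := b1_pos h hD
  set s := b 0 - b 1 - c 1 + 1 with hs
  have hspos : 0 < s := by omega
  set m := (Pp G x0).card with hm
  have hm2 : 2 ≤ m := Pp_two_le h hD hc2 x0
  have hmx : ∀ x : V, (Pp G x).card = m := by
    intro x
    exact Nat.eq_of_mul_eq_mul_right hspos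
      ((Pp_card_mul h hD hc2 x).trans (Pp_card_mul h hD hc2 x0).symm)
  have hmul0 : m * s = b 0 := Pp_card_mul h hD hc2 x0
  obtain ⟨y1, hxy1⟩ := exists_neighbor h hD x0
  have hss : s + b 1 = b 0 := by
    have := a1_count h hD hxy1
    omega
  have hb1eq : b 1 = (m - 1) * s := by
    have hsub : (m - 1) * s = m * s - 1 * s := Nat.sub_mul m 1 s
    rw [one_mul] at hsub
    omega
  refine ⟨m - 1, by omega, ?_, hb1eq, ?_, ?_⟩
  · -- IsGraphOfOrder
    intro x
    refine ⟨Pp G x, by rw [hmx x]; omega, ?_, ?_, ?_⟩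
    · intro C hC
      rw [mem_Pp] at hC
      obtain ⟨y, hy, rfl⟩ := hC
      constructor
      · have h1 := cls_card h hD hy
        have h2 := cls_card_pos (G := G) (x := x) (y := y)
        omega
      · exact cls_clique h hD hc2 hy
    · intro C₁ h1 C₂ h2 hne
      refine ⟨Pp_disj h hD hc2 h1 h2 hne, ?_⟩
      intro u hu v hv hadj
      have h1' := h1
      rw [mem_Pp] at h1'
      obtain ⟨ya, hya, hC1⟩ := h1'
      have hxv : G.Adj x v := by
        have h2' := h2
        rw [mem_Pp] at h2'
        obtain ⟨yb, hyb, hC2⟩ := h2'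
        subst hC2
        exact (SimpleGraph.mem_neighborFinset _ _ _).mp (cls_subset hyb hv)
      have hcu : cls G x u = C₁ := by
        rw [hC1] at hu ⊢
        exact cls_eq h hD hc2 hya hu
      have hvC1 : v ∈ C₁ := by
        rw [← hcu]
        exact mem_cls.mpr (Or.inr ⟨hxv, hadj⟩)
      exact Finset.disjoint_left.mp (Pp_disj h hD hc2 h1 h2 hne) hvC1 hv
    · intro y
      constructor
      · intro hy
        exact ⟨cls G x y, mem_Pp.mpr ⟨y, hy, rfl⟩, mem_cls.mpr (Or.inl rfl)⟩
      · rintro ⟨C, hC, hyC⟩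
        rw [mem_Pp] at hC
        obtain ⟨y', hy', rfl⟩ := hC
        exact (SimpleGraph.mem_neighborFinset _ _ _).mp (cls_subset hy' hyC)
  · -- (t + 1) * b 1 = t * b 0
    have hm1 : m - 1 + 1 = m := by omega
    rw [hm1, hb1eq, ← hmul0]
    ring
  · -- t = 1 → line graph
    intro ht1
    have hQ2card : ∀ x : V, (Qq G x).card = 2 := by
      intro x
      rw [Qq_card_eq x, hmx x]
      omega
    exact t1_linegraph h hD hc2 hQ2card
end
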